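/- arXiv:1004.1500 — 2 statements merged into one kernel-verified Lean document; each statement's English description precedes it below -/
import Mathlib

section
/- Suppose the QVE Mx = a + b(x,x) has a minimal nonnegative solution x* with x* > 0. Then ρ(M⁻¹(b(x*,·) + b(·,x*))) ≤ 1, where M⁻¹(b(x*,·) + b(·,x*)) denotes the matrix of the linear map w ↦ M⁻¹(b(x*, w) + b(w, x*)); consequently F'_{x*} is an M-matrix. -/
set_option maxHeartbeats 1000000


open Matrix Filter Topology

/-- The spectral radius of a real square matrix: the supremum of the norms of
its complex eigenvalues. -/
noncomputable def specRad {n : ℕ} (A : Matrix (Fin n) (Fin n) ℝ) : ℝ :=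
  sSup {r : ℝ | ∃ μ ∈ spectrum ℂ (A.map (Complex.ofReal)), ‖μ‖ = r}

/-- An M-matrix: a matrix of the form `s • 1 - P` with `P ≥ 0` and `ρ(P) ≤ s`. -/
def IsMMat {n : ℕ} (A : Matrix (Fin n) (Fin n) ℝ) : Prop :=
  ∃ (s : ℝ) (P : Matrix (Fin n) (Fin n) ℝ),
    (∀ i j, 0 ≤ P i j) ∧ specRad P ≤ s ∧ A = s • (1 : Matrix (Fin n) (Fin n) ℝ) - P

/-- A nonsingular M-matrix: an M-matrix that is invertible. -/
def IsNsMMat {n : ℕ} (A : Matrix (Fin n) (Fin n) ℝ) : Prop :=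
  IsMMat A ∧ IsUnit A.det

namespace QVEAux

variable {n : ℕ}

/-- entrywise nonneg -/
def Nn {n : ℕ} (A : Matrix (Fin n) (Fin n) ℝ) : Prop := ∀ i j, 0 ≤ A i j

/-- entrywise le -/
def Mle {n : ℕ} (A B : Matrix (Fin n) (Fin n) ℝ) : Prop := ∀ i j, A i j ≤ B i j

lemma mulVec_nonneg {A : Matrix (Fin n) (Fin n) ℝ} (hA : Nn A) {x : Fin n → ℝ}
    (hx : 0 ≤ x) : 0 ≤ A *ᵥ x := by
  intro i
  simp only [Pi.zero_apply, Matrix.mulVec, dotProduct]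
  exact Finset.sum_nonneg fun j _ => mul_nonneg (hA i j) (hx j)

lemma mulVec_mono {A : Matrix (Fin n) (Fin n) ℝ} (hA : Nn A) {x y : Fin n → ℝ}
    (hxy : x ≤ y) : A *ᵥ x ≤ A *ᵥ y := by
  have h := mulVec_nonneg hA (x := y - x) (by intro i; simpa using hxy i)
  intro i
  have h2 := h i
  rw [Matrix.mulVec_sub] at h2
  simp only [Pi.zero_apply, Pi.sub_apply] at h2
  linarith

lemma mul_nn {A B : Matrix (Fin n) (Fin n) ℝ} (hA : Nn A) (hB : Nn B) : Nn (A * B) := by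
  intro i j
  rw [Matrix.mul_apply]
  exact Finset.sum_nonneg fun l _ => mul_nonneg (hA i l) (hB l j)

lemma mul_mono {A A' B B' : Matrix (Fin n) (Fin n) ℝ} (hA : Nn A) (hB : Nn B)
    (hAA : Mle A A') (hBB : Mle B B') : Mle (A * B) (A' * B') := by
  intro i j
  rw [Matrix.mul_apply, Matrix.mul_apply]
  apply Finset.sum_le_sum
  intro l _
  exact mul_le_mul (hAA i l) (hBB l j) (hB l j) (le_trans (hA i l) (hAA i l))

lemma pow_nn {A : Matrix (Fin n) (Fin n) ℝ} (hA : Nn A) : ∀ k, Nn (A ^ k) := by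
  intro k
  induction k with
  | zero => intro i j; rw [pow_zero, Matrix.one_apply]; split <;> norm_num
  | succ k ih => rw [pow_succ]; exact mul_nn ih hA

lemma pow_mono {A A' : Matrix (Fin n) (Fin n) ℝ} (hA : Nn A) (hAA : Mle A A') :
    ∀ k, Mle (A ^ k) (A' ^ k) := by
  intro k
  induction k with
  | zero => intro i j; simp
  | succ k ih => rw [pow_succ, pow_succ]; exact mul_mono (pow_nn hA k) hA ih hAA

/-- uniform entrywise bound on powers -/
lemma pow_entry_bound (Q : Matrix (Fin n) (Fin n) ℝ) :
    ∃ b : ℝ, 1 ≤ b ∧ (∀ i j, |Q i j| ≤ b) ∧ ∀ k i j, |(Q ^ k) i j| ≤ b ^ k := by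
  have hsum : (0:ℝ) ≤ ∑ i, ∑ j, |Q i j| :=
    Finset.sum_nonneg fun i _ => Finset.sum_nonneg fun j _ => abs_nonneg _
  refine ⟨1 + ∑ i, ∑ j, |Q i j|, by linarith, ?_, ?_⟩
  · intro i j
    have h1 : |Q i j| ≤ ∑ j', |Q i j'| :=
      Finset.single_le_sum (f := fun j' => |Q i j'|) (fun j' _ => abs_nonneg _) (Finset.mem_univ j)
    have h2 : ∑ j', |Q i j'| ≤ ∑ i', ∑ j', |Q i' j'| :=
      Finset.single_le_sum (f := fun i' => ∑ j', |Q i' j'|)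
        (fun i' _ => Finset.sum_nonneg fun j' _ => abs_nonneg _) (Finset.mem_univ i)
    linarith
  · set b := 1 + ∑ i, ∑ j, |Q i j| with hb
    have hb1 : (1:ℝ) ≤ b := by rw [hb]; linarith
    intro k
    induction k with
    | zero =>
      intro i j
      rw [pow_zero, pow_zero, Matrix.one_apply]
      split <;> simp
    | succ k ih =>
      intro i j
      rw [pow_succ, Matrix.mul_apply]
      calc |∑ l, (Q ^ k) i l * Q l j| ≤ ∑ l, |(Q ^ k) i l * Q l j| :=
            Finset.abs_sum_le_sum_abs _ _
        _ ≤ ∑ l, b ^ k * |Q l j| := by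
            apply Finset.sum_le_sum
            intro l _
            rw [abs_mul]
            exact mul_le_mul_of_nonneg_right (ih i l) (abs_nonneg _)
        _ = b ^ k * ∑ l, |Q l j| := by rw [Finset.mul_sum]
        _ ≤ b ^ k * (b - 1) := by
            apply mul_le_mul_of_nonneg_left _ (by positivity)
            have : ∑ l, |Q l j| ≤ ∑ l, ∑ j', |Q l j'| := by
              apply Finset.sum_le_sum
              intro l _
              exact Finset.single_le_sum (f := fun j' => |Q l j'|) (fun j' _ => abs_nonneg _)
                (Finset.mem_univ j)
            simp only [hb]
            linarith
        _ ≤ b ^ k * b := by nlinarith [pow_nonneg (le_trans zero_le_one hb1) k]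
        _ = b ^ (k + 1) := by ring

lemma neumann (N : Matrix (Fin n) (Fin n) ℝ) (C q : ℝ) (hq0 : 0 ≤ q) (hq : q < 1)
    (hbd : ∀ k i j, |(N ^ k) i j| ≤ C * q ^ k) :
    ∃ W : Matrix (Fin n) (Fin n) ℝ,
      W * (1 - N) = 1 ∧ (1 - N) * W = 1 ∧ (∀ i j, W i j = ∑' k, (N ^ k) i j) := by
  have hsum : ∀ i j, Summable fun k => (N ^ k) i j := by
    intro i j
    apply Summable.of_abs
    apply Summable.of_nonneg_of_le (fun k => abs_nonneg _) (fun k => hbd k i j)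
    exact (summable_geometric_of_lt_one hq0 hq).mul_left C
  have hsum' : ∀ i j, Summable fun k => (N ^ (k+1)) i j := by
    intro i j
    apply Summable.of_abs
    refine Summable.of_nonneg_of_le (fun k => abs_nonneg _) (fun k => ?_)
      ((summable_geometric_of_lt_one hq0 hq).mul_left (C * q))
    calc |(N ^ (k+1)) i j| ≤ C * q ^ (k+1) := hbd (k+1) i j
      _ = C * q * q ^ k := by ring
  have htend : ∀ i j, Tendsto (fun k => (N ^ k) i j) atTop (𝓝 0) := by
    intro i j
    apply squeeze_zero_norm (fun k => hbd k i j)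
    simpa using (tendsto_pow_atTop_nhds_zero_of_lt_one hq0 hq).const_mul C
  have htel : ∀ i j, ∑' k, ((N ^ k) i j - (N ^ (k+1)) i j) = (1 : Matrix (Fin n) (Fin n) ℝ) i j := by
    intro i j
    have hs : Summable fun k => (N ^ k) i j - (N ^ (k+1)) i j := (hsum i j).sub (hsum' i j)
    have : HasSum (fun k => (N ^ k) i j - (N ^ (k+1)) i j) ((1 : Matrix (Fin n) (Fin n) ℝ) i j) := by
      rw [hs.hasSum_iff_tendsto_nat]
      have : ∀ m, ∑ k ∈ Finset.range m, ((N ^ k) i j - (N ^ (k+1)) i j)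
          = (N ^ 0) i j - (N ^ m) i j := fun m => Finset.sum_range_sub' (fun k => (N ^ k) i j) m
      simp only [this, pow_zero]
      have := (htend i j).const_sub ((1 : Matrix (Fin n) (Fin n) ℝ) i j)
      simpa using this
    exact this.tsum_eq
  refine ⟨Matrix.of fun i j => ∑' k, (N ^ k) i j, ?_, ?_, fun i j => rfl⟩
  · ext i j
    rw [Matrix.mul_apply]
    have step1 : ∀ l, (Matrix.of fun i j => ∑' k, (N ^ k) i j) i l * (1 - N) l j
        = ∑' k, (N ^ k) i l * (1 - N) l j := by
      intro l
      exact (tsum_mul_right).symm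
    simp only [step1]
    rw [← Summable.tsum_finsetSum (fun l _ => (hsum i l).mul_right _)]
    have inner : ∀ k, ∑ l, (N ^ k) i l * (1 - N) l j
        = (N ^ k) i j - (N ^ (k+1)) i j := by
      intro k
      have : ∑ l, (N ^ k) i l * (1 - N) l j = ((N ^ k) * (1 - N)) i j := by
        rw [Matrix.mul_apply]
      rw [this, Matrix.mul_sub, Matrix.mul_one, ← pow_succ]
      simp [Matrix.sub_apply]
    simp only [inner]
    exact htel i j
  · ext i j
    rw [Matrix.mul_apply]
    have step1 : ∀ l, (1 - N) i l * (Matrix.of fun i j => ∑' k, (N ^ k) i j) l j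
        = ∑' k, (1 - N) i l * (N ^ k) l j := by
      intro l
      exact (tsum_mul_left).symm
    simp only [step1]
    rw [← Summable.tsum_finsetSum (fun l _ => (hsum l j).mul_left _)]
    have inner : ∀ k, ∑ l, (1 - N) i l * (N ^ k) l j
        = (N ^ k) i j - (N ^ (k+1)) i j := by
      intro k
      have : ∑ l, (1 - N) i l * (N ^ k) l j = ((1 - N) * (N ^ k)) i j := by
        rw [Matrix.mul_apply]
      rw [this, Matrix.sub_mul, Matrix.one_mul, ← pow_succ']
      simp [Matrix.sub_apply]
    simp only [inner]
    exact htel i j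

/-- uniqueness of two-sided inverses -/
lemma inv_unique {A W1 W2 : Matrix (Fin n) (Fin n) ℝ} (h1 : W1 * A = 1) (h2 : A * W2 = 1) :
    W1 = W2 := by
  calc W1 = W1 * (A * W2) := by rw [h2, Matrix.mul_one]
    _ = (W1 * A) * W2 := by rw [Matrix.mul_assoc]
    _ = W2 := by rw [h1, Matrix.one_mul]


lemma map_ofReal_pow (A : Matrix (Fin n) (Fin n) ℝ) (k : ℕ) :
    (A.map Complex.ofReal) ^ k = (A ^ k).map Complex.ofReal := by
  induction k with
  | zero =>
    ext i j
    simp [Matrix.one_apply, Matrix.map_apply, apply_ite]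
  | succ k ih =>
    rw [pow_succ, pow_succ, ih]
    exact (Matrix.map_mul (f := Complex.ofRealHom)).symm

lemma exists_eigenvector {A : Matrix (Fin n) (Fin n) ℝ} {μ : ℂ}
    (hμ : μ ∈ spectrum ℂ (A.map Complex.ofReal)) :
    ∃ v : Fin n → ℂ, v ≠ 0 ∧ (A.map Complex.ofReal) *ᵥ v = μ • v := by
  rw [spectrum.mem_iff] at hμ
  have hdet : (algebraMap ℂ (Matrix (Fin n) (Fin n) ℂ) μ - A.map Complex.ofReal).det = 0 := by
    by_contra h
    exact hμ ((Matrix.isUnit_iff_isUnit_det _).mpr (isUnit_iff_ne_zero.mpr h))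
  obtain ⟨v, hv0, hv⟩ := Matrix.exists_mulVec_eq_zero_iff.mpr hdet
  refine ⟨v, hv0, ?_⟩
  have halg : algebraMap ℂ (Matrix (Fin n) (Fin n) ℂ) μ = μ • 1 :=
    Algebra.algebraMap_eq_smul_one μ
  rw [halg, Matrix.sub_mulVec, Matrix.smul_mulVec, Matrix.one_mulVec, sub_eq_zero] at hv
  exact hv.symm

lemma mulVec_abs_le {A : Matrix (Fin n) (Fin n) ℝ} (hA : Nn A) (v : Fin n → ℂ) (i : Fin n) :
    ‖((A.map Complex.ofReal) *ᵥ v) i‖ ≤ (A *ᵥ fun j => ‖v j‖) i := by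
  simp only [Matrix.mulVec, dotProduct, Matrix.map_apply]
  calc ‖∑ j, (A i j : ℂ) * v j‖ ≤ ∑ j, ‖(A i j : ℂ) * v j‖ := norm_sum_le _ _
    _ = ∑ j, A i j * ‖v j‖ := by
        apply Finset.sum_congr rfl
        intro j _
        rw [norm_mul, Complex.norm_real, Real.norm_eq_abs, abs_of_nonneg (hA i j)]

lemma eigenvector_pow {A : Matrix (Fin n) (Fin n) ℝ} {μ : ℂ} {v : Fin n → ℂ}
    (hv : (A.map Complex.ofReal) *ᵥ v = μ • v) (k : ℕ) :
    ((A ^ k).map Complex.ofReal) *ᵥ v = μ ^ k • v := by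
  induction k with
  | zero => simp [Matrix.one_mulVec]
  | succ k ih =>
    rw [← map_ofReal_pow] at ih ⊢
    rw [pow_succ', ← Matrix.mulVec_mulVec, ih, Matrix.mulVec_smul, hv, smul_smul, pow_succ']
    rw [mul_comm]

/-- from uniformly bounded weighted powers to eigenvalue bound -/
lemma eig_le_of_pow_bound {A : Matrix (Fin n) (Fin n) ℝ} (hA : Nn A)
    {xs w : Fin n → ℝ} (hxs : ∀ i, 0 < xs i) {t : ℝ} (ht : 0 < t)
    (hpow : ∀ k i, t ^ k * (((A ^ k) *ᵥ xs) i) ≤ w i) :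
    ∀ μ ∈ spectrum ℂ (A.map Complex.ofReal), t * ‖μ‖ ≤ 1 := by
  intro μ hμ
  obtain ⟨v, hv0, hv⟩ := exists_eigenvector hμ
  set u : Fin n → ℝ := fun i => ‖v i‖ with hu
  have hu0 : 0 ≤ u := fun i => norm_nonneg _
  obtain ⟨i0, hi0⟩ : ∃ i, v i ≠ 0 := by
    by_contra h
    push_neg at h
    exact hv0 (funext h)
  have hui0 : 0 < u i0 := norm_pos_iff.mpr hi0
  -- u ≤ c • xs
  set c : ℝ := ∑ i, u i / xs i with hc
  have hc0 : 0 ≤ c := Finset.sum_nonneg fun i _ => div_nonneg (hu0 i) (hxs i).le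
  have hucxs : u ≤ c • xs := by
    intro i
    have h1 : u i / xs i ≤ c :=
      Finset.single_le_sum (f := fun i => u i / xs i)
        (fun i' _ => div_nonneg (hu0 i') (hxs i').le) (Finset.mem_univ i)
    have := mul_le_mul_of_nonneg_right h1 (hxs i).le
    rw [div_mul_cancel₀ _ (hxs i).ne'] at this
    simpa [Pi.smul_apply, smul_eq_mul] using this
  -- key: ∀ k, ‖μ‖^k * u i0 ≤ c * w i0 / t^k
  have hkey : ∀ k, (t * ‖μ‖) ^ k * u i0 ≤ c * w i0 := by
    intro k
    have h1 : ‖μ‖ ^ k * u i0 ≤ ((A ^ k) *ᵥ u) i0 := by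
      have := mulVec_abs_le (A := A ^ k) (pow_nn hA k) v i0
      rw [eigenvector_pow hv k] at this
      simpa [norm_smul, norm_pow] using this
    have h2 : ((A ^ k) *ᵥ u) i0 ≤ c * (((A ^ k) *ᵥ xs) i0) := by
      have hm := mulVec_mono (pow_nn hA k) hucxs
      have := hm i0
      rwa [Matrix.mulVec_smul, Pi.smul_apply, smul_eq_mul] at this
    have h3 : t ^ k * (((A ^ k) *ᵥ xs) i0) ≤ w i0 := hpow k i0
    have htk : (0:ℝ) < t ^ k := pow_pos ht k
    calc (t * ‖μ‖) ^ k * u i0 = t ^ k * (‖μ‖ ^ k * u i0) := by rw [mul_pow]; ring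
      _ ≤ t ^ k * (((A ^ k) *ᵥ u) i0) := by
          exact mul_le_mul_of_nonneg_left h1 htk.le
      _ ≤ t ^ k * (c * (((A ^ k) *ᵥ xs) i0)) := mul_le_mul_of_nonneg_left h2 htk.le
      _ = c * (t ^ k * (((A ^ k) *ᵥ xs) i0)) := by ring
      _ ≤ c * w i0 := mul_le_mul_of_nonneg_left h3 hc0
  by_contra h
  push_neg at h
  obtain ⟨k, hk⟩ := ((tendsto_pow_atTop_atTop_of_one_lt h).eventually_gt_atTop
    (c * w i0 / u i0)).exists
  have := hkey k
  rw [div_lt_iff₀ hui0] at hk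
  linarith

/-- eigenvalue bound from a nonnegative left inverse of τ•1 - N -/
lemma eig_le_of_inv {N W : Matrix (Fin n) (Fin n) ℝ} (hN : Nn N) (hW : Nn W) {τ : ℝ}
    (hWA : W * (τ • (1 : Matrix (Fin n) (Fin n) ℝ) - N) = 1) :
    ∀ μ ∈ spectrum ℂ (N.map Complex.ofReal), ‖μ‖ ≤ τ := by
  intro μ hμ
  obtain ⟨v, hv0, hv⟩ := exists_eigenvector hμ
  set u : Fin n → ℝ := fun i => ‖v i‖ with hu
  have hu0 : 0 ≤ u := fun i => norm_nonneg _
  by_contra h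
  push_neg at h
  -- N *ᵥ u ≥ ‖μ‖ • u
  have h1 : ∀ i, ‖μ‖ * u i ≤ (N *ᵥ u) i := by
    intro i
    have := mulVec_abs_le hN v i
    rw [hv] at this
    simpa [norm_smul] using this
  -- A *ᵥ u ≤ (τ - ‖μ‖) • u
  set A := τ • (1 : Matrix (Fin n) (Fin n) ℝ) - N with hA
  have h2 : ∀ i, (A *ᵥ u) i ≤ (τ - ‖μ‖) * u i := by
    intro i
    rw [hA, Matrix.sub_mulVec, Matrix.smul_mulVec, Matrix.one_mulVec]
    simp only [Pi.sub_apply, Pi.smul_apply, smul_eq_mul]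
    have := h1 i
    linarith
  have h3 : ∀ i, u i ≤ (τ - ‖μ‖) * ((W *ᵥ u) i) := by
    intro i
    have hWAu : W *ᵥ (A *ᵥ u) = u := by
      rw [Matrix.mulVec_mulVec, hWA, Matrix.one_mulVec]
    have hmono := mulVec_mono hW (x := A *ᵥ u) (y := (τ - ‖μ‖) • u) (fun i => h2 i)
    have := hmono i
    rw [hWAu, Matrix.mulVec_smul] at this
    simpa [smul_eq_mul] using this
  obtain ⟨i0, hi0⟩ : ∃ i, v i ≠ 0 := by
    by_contra hcc
    push_neg at hcc
    exact hv0 (funext hcc)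
  have hui0 : 0 < u i0 := norm_pos_iff.mpr hi0
  have hWu : 0 ≤ (W *ᵥ u) i0 := mulVec_nonneg hW hu0 i0
  have hneg : τ - ‖μ‖ < 0 := by linarith
  nlinarith [h3 i0]

lemma specRad_le_of_eig {A : Matrix (Fin n) (Fin n) ℝ} {c : ℝ} (hc : 0 ≤ c)
    (h : ∀ μ ∈ spectrum ℂ (A.map Complex.ofReal), ‖μ‖ ≤ c) : True := trivial



section Gelfand

variable {n : ℕ} [Nonempty (Fin n)]

attribute [local instance] Matrix.linftyOpNormedRing Matrix.linftyOpNormedAlgebra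

local instance : CompleteSpace (Matrix (Fin n) (Fin n) ℂ) :=
  inferInstance

lemma entry_norm_le (A : Matrix (Fin n) (Fin n) ℂ) (i j : Fin n) : ‖A i j‖ ≤ ‖A‖ := by
  have h1 : ‖A i j‖₊ ≤ ∑ j', ‖A i j'‖₊ :=
    Finset.single_le_sum (f := fun j' => ‖A i j'‖₊) (fun _ _ => zero_le) (Finset.mem_univ j)
  have h2 : (∑ j', ‖A i j'‖₊) ≤ ‖A‖₊ := by
    rw [Matrix.linfty_opNNNorm_def]
    exact Finset.le_sup (f := fun i => ∑ j', ‖A i j'‖₊) (Finset.mem_univ i)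
  exact_mod_cast (h1.trans h2)

lemma bddAbove_eigSet (A : Matrix (Fin n) (Fin n) ℝ) :
    BddAbove {r : ℝ | ∃ μ ∈ spectrum ℂ (A.map (Complex.ofReal)), ‖μ‖ = r} := by
  refine ⟨‖A.map Complex.ofReal‖, ?_⟩
  rintro r ⟨μ, hμ, rfl⟩
  exact spectrum.norm_le_norm_of_mem hμ

lemma specRad_nonneg (A : Matrix (Fin n) (Fin n) ℝ) : 0 ≤ specRad A := by
  obtain ⟨μ, hμ⟩ := spectrum.nonempty (A.map Complex.ofReal)
  have := le_csSup (bddAbove_eigSet A) (by exact ⟨μ, hμ, rfl⟩ :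
    ‖μ‖ ∈ {r : ℝ | ∃ μ ∈ spectrum ℂ (A.map (Complex.ofReal)), ‖μ‖ = r})
  exact le_trans (norm_nonneg μ) this

lemma eig_le_specRad {A : Matrix (Fin n) (Fin n) ℝ} {μ : ℂ}
    (hμ : μ ∈ spectrum ℂ (A.map Complex.ofReal)) : ‖μ‖ ≤ specRad A :=
  le_csSup (bddAbove_eigSet A) ⟨μ, hμ, rfl⟩

lemma gelfand_pow_bound (P : Matrix (Fin n) (Fin n) ℝ) (s t : ℝ)
    (hs : specRad P ≤ s) (hst : s < t) :
    ∃ C : ℝ, 0 < C ∧ ∀ k i j, |(P ^ k) i j| ≤ C * t ^ k := by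
  set Pc := P.map Complex.ofReal with hPc
  have hs0 : 0 ≤ s := le_trans (specRad_nonneg P) hs
  have ht0 : 0 < t := lt_of_le_of_lt hs0 hst
  have hrad : spectralRadius ℂ Pc ≤ ENNReal.ofReal s := by
    rw [spectralRadius]
    refine iSup₂_le fun μ hμ => ?_
    rw [← enorm_eq_nnnorm, ← ofReal_norm]
    exact ENNReal.ofReal_le_ofReal ((eig_le_specRad hμ).trans hs)
  have hlt : spectralRadius ℂ Pc < ENNReal.ofReal t :=
    lt_of_le_of_lt hrad (by rwa [ENNReal.ofReal_lt_ofReal_iff ht0])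
  have hev : ∀ᶠ k : ℕ in atTop, (‖Pc ^ k‖₊ : ENNReal) ^ (1 / (k:ℝ)) < ENNReal.ofReal t :=
    (spectrum.pow_nnnorm_pow_one_div_tendsto_nhds_spectralRadius Pc).eventually_lt_const hlt
  obtain ⟨K, hK⟩ := eventually_atTop.mp hev
  set K' := max K 1 with hK'
  have hnorm_le : ∀ k, K' ≤ k → ‖Pc ^ k‖ ≤ t ^ k := by
    intro k hk
    have hk0 : k ≠ 0 := by omega
    have h1 := hK k (le_trans (le_max_left _ _) hk)
    have h2 : ((‖Pc ^ k‖₊ : ENNReal) ^ (1 / (k:ℝ))) ^ (k : ℕ)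
        ≤ (ENNReal.ofReal t) ^ (k : ℕ) := pow_le_pow_left' h1.le k
    rw [← ENNReal.rpow_natCast ((‖Pc ^ k‖₊ : ENNReal) ^ (1 / (k:ℝ))), ← ENNReal.rpow_mul,
      one_div, inv_mul_cancel₀ (by exact_mod_cast hk0 : (k:ℝ) ≠ 0), ENNReal.rpow_one] at h2
    rw [← ENNReal.ofReal_pow ht0.le] at h2
    rw [← enorm_eq_nnnorm, ← ofReal_norm] at h2
    exact (ENNReal.ofReal_le_ofReal_iff (by positivity)).mp h2
  set C := 1 + ∑ k ∈ Finset.range K', ‖Pc ^ k‖ / t ^ k with hC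
  have hC1 : (1:ℝ) ≤ C := by
    rw [hC]
    have : (0:ℝ) ≤ ∑ k ∈ Finset.range K', ‖Pc ^ k‖ / t ^ k :=
      Finset.sum_nonneg fun k _ => div_nonneg (norm_nonneg _) (by positivity)
    linarith
  refine ⟨C, by linarith, ?_⟩
  intro k i j
  have hentry : |(P ^ k) i j| ≤ ‖Pc ^ k‖ := by
    have h := entry_norm_le (Pc ^ k) i j
    have hPck : Pc ^ k = (P ^ k).map Complex.ofReal := map_ofReal_pow P k
    calc |(P ^ k) i j| = ‖(Pc ^ k) i j‖ := by
          rw [hPck, Matrix.map_apply, Complex.norm_real, Real.norm_eq_abs]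
      _ ≤ ‖Pc ^ k‖ := h
  rcases le_or_gt K' k with hk | hk
  · calc |(P ^ k) i j| ≤ ‖Pc ^ k‖ := hentry
      _ ≤ t ^ k := hnorm_le k hk
      _ ≤ C * t ^ k := le_mul_of_one_le_left (by positivity) hC1
  · have hterm : ‖Pc ^ k‖ / t ^ k ≤ C := by
      rw [hC]
      have h1 : ‖Pc ^ k‖ / t ^ k ≤ ∑ k' ∈ Finset.range K', ‖Pc ^ k'‖ / t ^ k' :=
        Finset.single_le_sum (f := fun k' => ‖Pc ^ k'‖ / t ^ k')
          (fun k' _ => div_nonneg (norm_nonneg _) (by positivity)) (Finset.mem_range.mpr hk)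
      linarith
    calc |(P ^ k) i j| ≤ ‖Pc ^ k‖ := hentry
      _ = (‖Pc ^ k‖ / t ^ k) * t ^ k := by field_simp
      _ ≤ C * t ^ k := mul_le_mul_of_nonneg_right hterm (by positivity)

end Gelfand



section Inverses

variable [Nonempty (Fin n)]

attribute [local instance] Matrix.linftyOpNormedRing Matrix.linftyOpNormedAlgebra

lemma shifted_inv {P : Matrix (Fin n) (Fin n) ℝ} {s : ℝ} (hP : Nn P) (hs : specRad P ≤ s)
    {ε : ℝ} (hε : 0 < ε) :
    ∃ W : Matrix (Fin n) (Fin n) ℝ,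
      ((s + ε) • (1 : Matrix (Fin n) (Fin n) ℝ) - P) * W = 1 ∧
      W * ((s + ε) • (1 : Matrix (Fin n) (Fin n) ℝ) - P) = 1 ∧
      (∀ i j, W i j = ∑' k, ((s + ε)⁻¹) ^ (k + 1) * ((P ^ k) i j)) ∧
      (∀ i j, Summable fun k => ((s + ε)⁻¹) ^ (k + 1) * ((P ^ k) i j)) := by
  have hs0 : 0 ≤ s := le_trans (specRad_nonneg P) hs
  set σ := s + ε with hσdef
  have hσ : 0 < σ := by rw [hσdef]; linarith
  obtain ⟨C, hC, hbd⟩ := gelfand_pow_bound P s (s + ε/2) hs (by linarith)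
  set N := σ⁻¹ • P with hN
  set q := (s + ε/2) / σ with hq
  have hq0 : 0 ≤ q := div_nonneg (by linarith) hσ.le
  have hq1 : q < 1 := by
    rw [hq, div_lt_one hσ]
    linarith
  have hNk : ∀ k, N ^ k = (σ⁻¹) ^ k • P ^ k := fun k => smul_pow σ⁻¹ P k
  have hNbd : ∀ k i j, |(N ^ k) i j| ≤ C * q ^ k := by
    intro k i j
    rw [hNk k, Matrix.smul_apply, smul_eq_mul, abs_mul, abs_pow, abs_inv,
      abs_of_pos hσ]
    calc (σ⁻¹) ^ k * |(P ^ k) i j| ≤ (σ⁻¹) ^ k * (C * (s + ε/2) ^ k) := by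
          apply mul_le_mul_of_nonneg_left (hbd k i j) (by positivity)
      _ = C * q ^ k := by
          rw [hq, div_pow]
          ring
  obtain ⟨W₀, h1, h2, hf⟩ := neumann N C q hq0 hq1 hNbd
  have hsum₀ : ∀ i j, Summable fun k => (N ^ k) i j := by
    intro i j
    apply Summable.of_abs
    apply Summable.of_nonneg_of_le (fun k => abs_nonneg _) (fun k => hNbd k i j)
    exact (summable_geometric_of_lt_one hq0 hq1).mul_left C
  have hfact : σ • (1 : Matrix (Fin n) (Fin n) ℝ) - P = σ • (1 - N) := by
    rw [smul_sub, hN, smul_smul, mul_inv_cancel₀ hσ.ne', one_smul]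
  refine ⟨σ⁻¹ • W₀, ?_, ?_, ?_, ?_⟩
  · rw [hfact, smul_mul_assoc, mul_smul_comm, smul_smul, mul_inv_cancel₀ hσ.ne', one_smul, h2]
  · rw [hfact, smul_mul_assoc, mul_smul_comm, smul_smul, inv_mul_cancel₀ hσ.ne', one_smul, h1]
  · intro i j
    rw [Matrix.smul_apply, smul_eq_mul, hf i j, ← tsum_mul_left]
    apply tsum_congr
    intro k
    rw [hNk k, Matrix.smul_apply, smul_eq_mul, pow_succ']
    ring
  · intro i j
    have h := (hsum₀ i j).mul_left σ⁻¹
    apply h.congr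
    intro k
    rw [hNk k, Matrix.smul_apply, smul_eq_mul, pow_succ']
    ring

lemma Minv_family {M P : Matrix (Fin n) (Fin n) ℝ} {s : ℝ} (hP : Nn P) (hs : specRad P ≤ s)
    (hM : M = s • (1 : Matrix (Fin n) (Fin n) ℝ) - P) (hdet : IsUnit M.det) :
    Nn M⁻¹ ∧ ∀ ε : ℝ, 0 < ε → ∃ W : Matrix (Fin n) (Fin n) ℝ,
      (M + ε • (1 : Matrix (Fin n) (Fin n) ℝ)) * W = 1 ∧
      W * (M + ε • (1 : Matrix (Fin n) (Fin n) ℝ)) = 1 ∧ Nn W ∧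
      Mle W (((s + ε/2) / (s + ε)) • M⁻¹) := by
  have hs0 : 0 ≤ s := le_trans (specRad_nonneg P) hs
  have hMM : M * M⁻¹ = 1 := Matrix.mul_nonsing_inv M hdet
  have hMM' : M⁻¹ * M = 1 := Matrix.nonsing_inv_mul M hdet
  have hshift : ∀ ε : ℝ, M + ε • (1 : Matrix (Fin n) (Fin n) ℝ)
      = (s + ε) • (1 : Matrix (Fin n) (Fin n) ℝ) - P := by
    intro ε
    rw [hM, add_smul]
    abel
  choose W h1 h2 hf hsum using fun (ε : ℝ) (hε : 0 < ε) => shifted_inv (P := P) (s := s) hP hs hε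
  have hWnn : ∀ ε (hε : 0 < ε), Nn (W ε hε) := by
    intro ε hε i j
    rw [hf ε hε i j]
    exact tsum_nonneg fun k => mul_nonneg (by positivity) (pow_nn hP k i j)
  obtain ⟨b, hb1, hbE, hbK⟩ := pow_entry_bound (M⁻¹)
  have hb0 : 0 < b := lt_of_lt_of_le one_pos hb1
  set D : ℝ := 2 * n * b ^ 2 with hD
  have hD0 : 0 ≤ D := by positivity
  -- closeness of W δ to M⁻¹
  have hclose : ∀ δ (hδ : 0 < δ), δ * b ≤ 1/2 →
      ∀ i j, |W δ hδ i j - M⁻¹ i j| ≤ δ * D := by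
    intro δ hδ hδb i j
    have hδb0 : 0 ≤ δ * b := by positivity
    have hδb1 : δ * b < 1 := by linarith
    set N' := (-δ) • M⁻¹ with hN'
    have hN'bd : ∀ k i j, |(N' ^ k) i j| ≤ 1 * (δ * b) ^ k := by
      intro k i j
      rw [hN', smul_pow, Matrix.smul_apply, smul_eq_mul, abs_mul, abs_pow, abs_neg,
        abs_of_pos hδ, one_mul, mul_pow]
      exact mul_le_mul_of_nonneg_left (hbK k i j) (by positivity)
    obtain ⟨W'', g1, g2, gf⟩ := neumann N' 1 (δ * b) hδb0 hδb1 hN'bd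
    have hsum'' : ∀ i l, Summable fun k => (N' ^ k) i l := by
      intro i l
      apply Summable.of_abs
      apply Summable.of_nonneg_of_le (fun k => abs_nonneg _) (fun k => hN'bd k i l)
      exact (summable_geometric_of_lt_one hδb0 hδb1).mul_left 1
    have hone : (1 : Matrix (Fin n) (Fin n) ℝ) - N' = 1 + δ • M⁻¹ := by
      rw [hN', sub_eq_add_neg, ← neg_smul, neg_neg]
    have hfac1 : M + δ • (1 : Matrix (Fin n) (Fin n) ℝ) = M * (1 - N') := by
      rw [hone, Matrix.mul_add, Matrix.mul_one, mul_smul_comm, hMM]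
    have hcomm : M⁻¹ * (1 - N') = (1 - N') * M⁻¹ := by
      rw [hone, Matrix.mul_add, Matrix.add_mul, Matrix.mul_one, Matrix.one_mul,
        mul_smul_comm, smul_mul_assoc]
    -- W δ hδ = W'' * M⁻¹
    have hprod1 : (M + δ • (1 : Matrix (Fin n) (Fin n) ℝ)) * (W'' * M⁻¹) = 1 := by
      rw [hfac1, Matrix.mul_assoc, ← Matrix.mul_assoc (1 - N'), g2, Matrix.one_mul, hMM]
    have hWδ : W δ hδ * (M + δ • (1 : Matrix (Fin n) (Fin n) ℝ)) = 1 := by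
      rw [hshift δ]; exact h2 δ hδ
    have hWeq : W δ hδ = W'' * M⁻¹ := inv_unique hWδ hprod1
    -- entry estimate
    have htail : ∀ i l, |W'' i l - (1 : Matrix (Fin n) (Fin n) ℝ) i l| ≤ 2 * (δ * b) := by
      intro i l
      have hgeo : Summable fun k : ℕ => (δ * b) ^ (k + 1) := by
        apply Summable.of_nonneg_of_le (fun k => by positivity) (fun k => le_of_eq (pow_succ' _ _))
        exact (summable_geometric_of_lt_one hδb0 hδb1).mul_left (δ * b)
      have hsumtail : Summable fun k => (N' ^ (k + 1)) i l := by
        apply Summable.of_abs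
        exact Summable.of_nonneg_of_le (fun k => abs_nonneg _)
          (fun k => by simpa using hN'bd (k+1) i l) hgeo
      have hsplit : W'' i l = (1 : Matrix (Fin n) (Fin n) ℝ) i l + ∑' k, (N' ^ (k + 1)) i l := by
        rw [gf i l, Summable.tsum_eq_zero_add (hsum'' i l), pow_zero]
      rw [hsplit]
      have habs : |∑' k, (N' ^ (k + 1)) i l| ≤ ∑' k : ℕ, (δ * b) ^ (k + 1) := by
        calc |∑' k, (N' ^ (k + 1)) i l| ≤ ∑' k, |(N' ^ (k + 1)) i l| := by
              simpa using norm_tsum_le_tsum_norm (f := fun k => (N' ^ (k+1)) i l)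
                (by simpa [Real.norm_eq_abs] using hsumtail.abs)
          _ ≤ ∑' k : ℕ, (δ * b) ^ (k + 1) := by
              apply Summable.tsum_le_tsum _ hsumtail.abs hgeo
              intro k
              simpa using hN'bd (k+1) i l
      have hval : ∑' k : ℕ, (δ * b) ^ (k + 1) = (δ * b) * (1 - δ * b)⁻¹ := by
        have : ∀ k : ℕ, (δ * b) ^ (k + 1) = (δ * b) * (δ * b) ^ k := fun k => pow_succ' _ _
        rw [tsum_congr this, tsum_mul_left, tsum_geometric_of_lt_one hδb0 hδb1]
      have hinv : (1 - δ * b)⁻¹ ≤ 2 := by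
        rw [inv_le_comm₀ (by linarith) (by norm_num)]
        linarith
      have : |∑' k, (N' ^ (k + 1)) i l| ≤ 2 * (δ * b) := by
        rw [hval] at habs
        calc |∑' k, (N' ^ (k + 1)) i l| ≤ (δ * b) * (1 - δ * b)⁻¹ := habs
          _ ≤ (δ * b) * 2 := mul_le_mul_of_nonneg_left hinv hδb0
          _ = 2 * (δ * b) := by ring
      calc |(1:Matrix (Fin n) (Fin n) ℝ) i l + ∑' k, (N' ^ (k+1)) i l
            - (1:Matrix (Fin n) (Fin n) ℝ) i l| = |∑' k, (N' ^ (k+1)) i l| := by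
              rw [add_sub_cancel_left]
        _ ≤ 2 * (δ * b) := this
    rw [hWeq]
    have hdiff : (W'' * M⁻¹) i j - M⁻¹ i j
        = ∑ l, (W'' i l - (1 : Matrix (Fin n) (Fin n) ℝ) i l) * M⁻¹ l j := by
      rw [Matrix.mul_apply]
      have : M⁻¹ i j = ∑ l, (1 : Matrix (Fin n) (Fin n) ℝ) i l * M⁻¹ l j := by
        have := congrArg (fun A => A i j) (Matrix.one_mul M⁻¹)
        simpa [Matrix.mul_apply] using this.symm
      rw [this, ← Finset.sum_sub_distrib]
      apply Finset.sum_congr rfl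
      intro l _
      ring
    rw [hdiff]
    calc |∑ l, (W'' i l - (1 : Matrix (Fin n) (Fin n) ℝ) i l) * M⁻¹ l j|
        ≤ ∑ l, |(W'' i l - (1 : Matrix (Fin n) (Fin n) ℝ) i l) * M⁻¹ l j| :=
          Finset.abs_sum_le_sum_abs _ _
      _ ≤ ∑ _l : Fin n, 2 * (δ * b) * b := by
          apply Finset.sum_le_sum
          intro l _
          rw [abs_mul]
          apply mul_le_mul (htail i l) _ (abs_nonneg _) (by positivity)
          calc |M⁻¹ l j| = |(M⁻¹ ^ 1) l j| := by rw [pow_one]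
            _ ≤ b ^ 1 := hbK 1 l j
            _ = b := pow_one b
      _ = n * (2 * (δ * b) * b) := by
          rw [Finset.sum_const, Finset.card_univ]
          simp [mul_comm]
      _ = δ * D := by rw [hD]; ring
  -- generalize the closeness constant
  clear hD
  clear_value D
  -- a picking lemma for small δ
  have hpick : ∀ g e0 : ℝ, 0 < g → 0 < e0 →
      ∃ δ : ℝ, 0 < δ ∧ δ ≤ e0 ∧ δ * b ≤ 1/2 ∧ δ * D < g := by
    intro g e0 hg he0
    refine ⟨min e0 (min (1/(2*b)) (g/(2*(D+1)))),
      lt_min he0 (lt_min (by positivity) (by positivity)), min_le_left _ _, ?_, ?_⟩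
    · have h1 : min e0 (min (1/(2*b)) (g/(2*(D+1)))) ≤ 1/(2*b) :=
        le_trans (min_le_right _ _) (min_le_left _ _)
      have h2 : (1/(2*b)) * b = 1/2 := by
        rw [div_mul_eq_mul_div, one_mul, mul_comm 2 b, ← div_div, div_self hb0.ne']
      calc min e0 (min (1/(2*b)) (g/(2*(D+1)))) * b ≤ (1/(2*b)) * b :=
            mul_le_mul_of_nonneg_right h1 hb0.le
        _ = 1/2 := h2
    · have h1 : min e0 (min (1/(2*b)) (g/(2*(D+1)))) ≤ g/(2*(D+1)) :=
        le_trans (min_le_right _ _) (min_le_right _ _)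
      have h3 : (g / (2 * (D + 1))) * D < g := by
        rw [div_mul_eq_mul_div, div_lt_iff₀ (by positivity)]
        nlinarith
      exact lt_of_le_of_lt (mul_le_mul_of_nonneg_right h1 hD0) h3
  -- M⁻¹ is entrywise nonnegative
  have hMinvNn : Nn M⁻¹ := by
    intro i j
    by_contra hneg
    push_neg at hneg
    obtain ⟨δ, hδ0, _, hδb, hδD⟩ := hpick (-(M⁻¹ i j)) 1 (by linarith) one_pos
    have hcl := hclose δ hδ0 hδb i j
    have hWnn' := hWnn δ hδ0 i j
    have habs : W δ hδ0 i j - M⁻¹ i j ≤ δ * D := le_trans (le_abs_self _) hcl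
    linarith
  refine ⟨hMinvNn, ?_⟩
  intro ε hε
  have hε2 : 0 < ε / 2 := by linarith
  -- W (ε/2) ≤ M⁻¹ entrywise
  have hW2le : ∀ i j, W (ε/2) hε2 i j ≤ M⁻¹ i j := by
    intro i j
    by_contra hgt
    push_neg at hgt
    obtain ⟨δ, hδ0, hδe, hδb, hδD⟩ :=
      hpick (W (ε/2) hε2 i j - M⁻¹ i j) (ε/2) (by linarith) hε2
    -- series comparison : W (ε/2) ≤ W δ entrywise
    have hmono : W (ε/2) hε2 i j ≤ W δ hδ0 i j := by
      rw [hf _ hε2 i j, hf _ hδ0 i j]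
      apply Summable.tsum_le_tsum _ (hsum _ hε2 i j) (hsum _ hδ0 i j)
      intro k
      apply mul_le_mul_of_nonneg_right _ (pow_nn hP k i j)
      apply pow_le_pow_left₀ (by positivity)
      apply inv_anti₀ (by linarith)
      linarith
    have hcl := hclose δ hδ0 hδb i j
    have habs : W δ hδ0 i j - M⁻¹ i j ≤ δ * D := le_trans (le_abs_self _) hcl
    linarith
  refine ⟨W ε hε, ?_, ?_, hWnn ε hε, ?_⟩
  · rw [hshift ε]; exact h1 ε hε
  · rw [hshift ε]; exact h2 ε hε
  · -- W ε ≤ ((s+ε/2)/(s+ε)) • M⁻¹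
    intro i j
    set r' : ℝ := (s + ε/2) / (s + ε) with hr'
    have hr'0 : 0 ≤ r' := by positivity
    have step1 : W ε hε i j ≤ r' * W (ε/2) hε2 i j := by
      rw [hf _ hε i j, hf _ hε2 i j, ← tsum_mul_left]
      apply Summable.tsum_le_tsum _ (hsum _ hε i j) ((hsum _ hε2 i j).mul_left r')
      intro k
      rw [← mul_assoc]
      apply mul_le_mul_of_nonneg_right _ (pow_nn hP k i j)
      have e1 : ((s+ε)⁻¹) ^ (k+1) = ((s+ε) * (s+ε) ^ k)⁻¹ := by
        rw [inv_pow, pow_succ']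
      have e2 : r' * ((s+ε/2)⁻¹) ^ (k+1) = ((s+ε) * (s+ε/2) ^ k)⁻¹ := by
        rw [inv_pow, pow_succ', hr']
        rw [mul_inv, mul_inv]
        field_simp
      rw [e1, e2]
      apply inv_anti₀ (by positivity)
      apply mul_le_mul_of_nonneg_left _ (by linarith)
      exact pow_le_pow_left₀ (by linarith) (by linarith) k
    calc W ε hε i j ≤ r' * W (ε/2) hε2 i j := step1
      _ ≤ r' * M⁻¹ i j := mul_le_mul_of_nonneg_left (hW2le i j) hr'0
      _ = (r' • M⁻¹) i j := by rw [Matrix.smul_apply, smul_eq_mul]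

end Inverses

section Bilinear

variable {b : (Fin n → ℝ) →ₗ[ℝ] (Fin n → ℝ) →ₗ[ℝ] (Fin n → ℝ)}

lemma bil_expand (b : (Fin n → ℝ) →ₗ[ℝ] (Fin n → ℝ) →ₗ[ℝ] (Fin n → ℝ)) (v w : Fin n → ℝ) :
    b v w = ∑ j, v j • b (Pi.single j 1) w := by
  have hv : v = ∑ j, v j • (Pi.single j 1 : Fin n → ℝ) := by
    have h1 : ∀ j, v j • (Pi.single j 1 : Fin n → ℝ) = Pi.single j (v j) := by
      intro j
      ext i
      by_cases h : i = j <;> simp [Pi.single_apply, h]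
    rw [Finset.sum_congr rfl fun j _ => h1 j, Finset.univ_sum_single]
  conv_lhs => rw [hv]
  rw [map_sum]
  simp only [LinearMap.coe_sum, Finset.sum_apply, _root_.map_smul, LinearMap.smul_apply]

lemma bil_cont (b : (Fin n → ℝ) →ₗ[ℝ] (Fin n → ℝ) →ₗ[ℝ] (Fin n → ℝ)) :
    Continuous fun v : Fin n → ℝ => b v v := by
  have : (fun v : Fin n → ℝ => b v v) = fun v => ∑ j, v j • b (Pi.single j 1) v := by
    funext v
    exact bil_expand b v v
  rw [this]
  apply continuous_finset_sum
  intro j _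
  exact (continuous_apply j).smul (b (Pi.single j 1)).continuous_of_finiteDimensional

lemma bil_mono (hb : ∀ x y : Fin n → ℝ, 0 ≤ x → 0 ≤ y → 0 ≤ b x y)
    {x y x' y' : Fin n → ℝ} (hx : 0 ≤ x) (hy : 0 ≤ y) (hxx : x ≤ x') (hyy : y ≤ y') :
    b x y ≤ b x' y' := by
  have hx' : 0 ≤ x' := le_trans hx hxx
  have h1 : b x' y' - b x y = b (x' - x) y' + b x (y' - y) := by
    rw [map_sub b, LinearMap.sub_apply, map_sub (b x)]
    abel
  have h2 : 0 ≤ b (x' - x) y' := hb _ _ (by intro i; simpa using hxx i) (le_trans hy hyy)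
  have h3 : 0 ≤ b x (y' - y) := hb _ _ hx (by intro i; simpa using hyy i)
  intro i
  have := add_nonneg (h2 i) (h3 i)
  rw [← Pi.add_apply, ← h1] at this
  simpa using this

end Bilinear

section Weight

variable {M : Matrix (Fin n) (Fin n) ℝ} {a : Fin n → ℝ}
  {b : (Fin n → ℝ) →ₗ[ℝ] (Fin n → ℝ) →ₗ[ℝ] (Fin n → ℝ)} {xs : Fin n → ℝ}

lemma Bmat_mulVec (b : (Fin n → ℝ) →ₗ[ℝ] (Fin n → ℝ) →ₗ[ℝ] (Fin n → ℝ)) (xs v : Fin n → ℝ) :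
    (LinearMap.toMatrix' (b xs) + LinearMap.toMatrix' (b.flip xs)) *ᵥ v
      = b xs v + b v xs := by
  rw [Matrix.add_mulVec]
  have h1 : LinearMap.toMatrix' (b xs) *ᵥ v = b xs v := by
    rw [← Matrix.toLin'_apply, Matrix.toLin'_toMatrix']
  have h2 : LinearMap.toMatrix' (b.flip xs) *ᵥ v = b v xs := by
    rw [← Matrix.toLin'_apply, Matrix.toLin'_toMatrix', LinearMap.flip_apply]
  rw [h1, h2]

lemma single_nonneg' (j : Fin n) : (0 : Fin n → ℝ) ≤ Pi.single j 1 := by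
  intro i
  rw [Pi.single_apply]
  split <;> norm_num

lemma Bmat_nn (hb : ∀ x y : Fin n → ℝ, 0 ≤ x → 0 ≤ y → 0 ≤ b x y) (hxs : 0 ≤ xs) :
    Nn (LinearMap.toMatrix' (b xs) + LinearMap.toMatrix' (b.flip xs)) := by
  intro i j
  have h := Bmat_mulVec b xs (Pi.single j 1)
  have h2 : ((LinearMap.toMatrix' (b xs) + LinearMap.toMatrix' (b.flip xs)) *ᵥ Pi.single j 1) i
      = (LinearMap.toMatrix' (b xs) + LinearMap.toMatrix' (b.flip xs)) i j := by
    simp [Matrix.mulVec_single]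
  rw [← h2, h]
  exact add_nonneg (hb _ _ hxs (single_nonneg' j) i) (hb _ _ (single_nonneg' j) hxs i)

lemma exists_weight
    (hMinvNn : Nn M⁻¹) (hMM : M * M⁻¹ = 1) (hMM' : M⁻¹ * M = 1)
    (ha : 0 ≤ a) (hb : ∀ x y : Fin n → ℝ, 0 ≤ x → 0 ≤ y → 0 ≤ b x y)
    (hxs_nonneg : 0 ≤ xs) (hxs_sol : M *ᵥ xs = a + b xs xs)
    (hxs_min : ∀ s : Fin n → ℝ, 0 ≤ s → M *ᵥ s = a + b s s → xs ≤ s)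
    (hxs_pos : ∀ i, 0 < xs i) {t : ℝ} (ht0 : 0 < t) (ht1 : t < 1) :
    ∃ w : Fin n → ℝ, 0 ≤ w ∧ ∀ k i,
      t ^ k * (((M⁻¹ * (LinearMap.toMatrix' (b xs) + LinearMap.toMatrix' (b.flip xs))) ^ k *ᵥ xs) i)
        ≤ w i := by
  set Bmat := LinearMap.toMatrix' (b xs) + LinearMap.toMatrix' (b.flip xs) with hBmat
  set R := M⁻¹ * Bmat with hR
  have hMinvM : ∀ v : Fin n → ℝ, M⁻¹ *ᵥ (M *ᵥ v) = v := by
    intro v; rw [Matrix.mulVec_mulVec, hMM', Matrix.one_mulVec]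
  have hMMinv : ∀ v : Fin n → ℝ, M *ᵥ (M⁻¹ *ᵥ v) = v := by
    intro v; rw [Matrix.mulVec_mulVec, hMM, Matrix.one_mulVec]
  have hBnn : Nn Bmat := Bmat_nn hb hxs_nonneg
  have hRnn : Nn R := mul_nn hMinvNn hBnn
  have hRv : ∀ v : Fin n → ℝ, R *ᵥ v = M⁻¹ *ᵥ (Bmat *ᵥ v) := by
    intro v; rw [hR, ← Matrix.mulVec_mulVec]
  -- the iteration map
  set Φ : ℝ → (Fin n → ℝ) → (Fin n → ℝ) := fun θ v => M⁻¹ *ᵥ (θ • a + b v v) with hΦ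
  have hΦcont : ∀ θ, Continuous (Φ θ) := by
    intro θ
    have h1 : Continuous fun v : Fin n → ℝ => θ • a + b v v :=
      continuous_const.add (bil_cont b)
    have h2 : Continuous fun u : Fin n → ℝ => M⁻¹ *ᵥ u := by
      have := (Matrix.mulVecLin M⁻¹).continuous_of_finiteDimensional
      exact this
    exact h2.comp h1
  have hΦmono : ∀ θ θ' : ℝ, 0 ≤ θ → θ ≤ θ' → ∀ v v' : Fin n → ℝ, 0 ≤ v → v ≤ v' →
      Φ θ v ≤ Φ θ' v' := by
    intro θ θ' hθ hθθ v v' hv hvv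
    apply mulVec_mono hMinvNn
    intro i
    have h1 : θ * a i ≤ θ' * a i := mul_le_mul_of_nonneg_right hθθ (ha i)
    have h2 := bil_mono hb hv hv hvv hvv i
    simp only [Pi.add_apply, Pi.smul_apply, smul_eq_mul]
    linarith
  have hΦnonneg : ∀ θ : ℝ, 0 ≤ θ → ∀ v : Fin n → ℝ, 0 ≤ v → 0 ≤ Φ θ v := by
    intro θ hθ v hv
    apply mulVec_nonneg hMinvNn
    intro i
    have h1 : 0 ≤ θ * a i := mul_nonneg hθ (ha i)
    have h2 := hb v v hv hv i
    simp only [Pi.zero_apply] at h2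
    simp only [Pi.add_apply, Pi.smul_apply, smul_eq_mul, Pi.zero_apply]
    linarith
  have hΦsuper : ∀ θ : ℝ, 0 ≤ θ → θ ≤ 1 → ∀ v : Fin n → ℝ, 0 ≤ v → v ≤ θ • xs →
      Φ θ v ≤ θ • xs := by
    intro θ hθ0 hθ1 v hv hvθ
    have step1 : Φ θ v ≤ Φ θ (θ • xs) := hΦmono θ θ hθ0 le_rfl v (θ • xs) hv hvθ
    have hθxs : (0:Fin n → ℝ) ≤ θ • xs := smul_nonneg hθ0 hxs_nonneg
    have step2 : Φ θ (θ • xs) ≤ θ • xs := by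
      rw [hΦ]
      have hbsmul : b (θ • xs) (θ • xs) = (θ * θ) • b xs xs := by
        rw [_root_.map_smul b, LinearMap.smul_apply, _root_.map_smul (b xs), smul_smul]
      have hle : θ • a + b (θ • xs) (θ • xs) ≤ θ • (a + b xs xs) := by
        rw [hbsmul]
        intro i
        simp only [Pi.add_apply, Pi.smul_apply, smul_eq_mul]
        have h1 : θ * θ * (b xs xs) i ≤ θ * (b xs xs) i := by
          have h0 := hb xs xs hxs_nonneg hxs_nonneg i
          simp only [Pi.zero_apply] at h0
          nlinarith [mul_nonneg hθ0 (mul_nonneg (sub_nonneg.mpr hθ1) h0)]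
        linarith
      calc M⁻¹ *ᵥ (θ • a + b (θ • xs) (θ • xs)) ≤ M⁻¹ *ᵥ (θ • (a + b xs xs)) :=
            mulVec_mono hMinvNn hle
        _ = θ • (M⁻¹ *ᵥ (a + b xs xs)) := Matrix.mulVec_smul _ _ _
        _ = θ • (M⁻¹ *ᵥ (M *ᵥ xs)) := by rw [hxs_sol]
        _ = θ • xs := by rw [hMinvM]
    exact le_trans step1 step2
  -- iterates
  set xk : ℝ → ℕ → (Fin n → ℝ) := fun θ k => (Φ θ)^[k] 0 with hxk
  have hxk_succ : ∀ θ k, xk θ (k+1) = Φ θ (xk θ k) := by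
    intro θ k
    rw [hxk]
    exact Function.iterate_succ_apply' (Φ θ) k 0
  have hxk_bounds : ∀ θ : ℝ, 0 ≤ θ → θ ≤ 1 → ∀ k, 0 ≤ xk θ k ∧ xk θ k ≤ θ • xs := by
    intro θ hθ0 hθ1 k
    induction k with
    | zero => exact ⟨le_rfl, smul_nonneg hθ0 hxs_nonneg⟩
    | succ k ih =>
      rw [hxk_succ]
      exact ⟨hΦnonneg θ hθ0 _ ih.1, hΦsuper θ hθ0 hθ1 _ ih.1 ih.2⟩
  have hxk_mono_k : ∀ θ : ℝ, 0 ≤ θ → θ ≤ 1 → ∀ k, xk θ k ≤ xk θ (k+1) := by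
    intro θ hθ0 hθ1 k
    induction k with
    | zero =>
      rw [hxk_succ]
      exact hΦnonneg θ hθ0 _ le_rfl
    | succ k ih =>
      rw [hxk_succ, hxk_succ]
      exact hΦmono θ θ hθ0 le_rfl _ _ (hxk_bounds θ hθ0 hθ1 k).1 ih
  have hxk_mono_θ : ∀ θ θ' : ℝ, 0 ≤ θ → θ ≤ θ' → θ' ≤ 1 → ∀ k, xk θ k ≤ xk θ' k := by
    intro θ θ' hθ0 hθθ hθ'1 k
    induction k with
    | zero => exact le_rfl
    | succ k ih =>
      rw [hxk_succ, hxk_succ]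
      exact hΦmono θ θ' hθ0 hθθ _ _ (hxk_bounds θ hθ0 (le_trans hθθ hθ'1) k).1 ih
  -- limits in k
  set z : ℝ → (Fin n → ℝ) := fun θ => fun i => ⨆ k, xk θ k i with hz
  have hz_lim : ∀ θ : ℝ, 0 ≤ θ → θ ≤ 1 → Tendsto (fun k => xk θ k) atTop (𝓝 (z θ)) := by
    intro θ hθ0 hθ1
    rw [tendsto_pi_nhds]
    intro i
    apply tendsto_atTop_ciSup
    · exact monotone_nat_of_le_succ fun k => hxk_mono_k θ hθ0 hθ1 k i
    · refine ⟨θ * xs i, ?_⟩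
      rintro r ⟨k, rfl⟩
      simpa [smul_eq_mul] using (hxk_bounds θ hθ0 hθ1 k).2 i
  have hz_bounds : ∀ θ : ℝ, 0 ≤ θ → θ ≤ 1 → 0 ≤ z θ ∧ z θ ≤ θ • xs := by
    intro θ hθ0 hθ1
    constructor
    · intro i
      have hbdd : BddAbove (Set.range fun k => xk θ k i) := by
        refine ⟨θ * xs i, ?_⟩
        rintro r ⟨k, rfl⟩
        simpa [smul_eq_mul] using (hxk_bounds θ hθ0 hθ1 k).2 i
      have h0 : xk θ 0 i ≤ z θ i := le_ciSup (f := fun k => xk θ k i) hbdd 0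
      simpa using le_trans (by simp [hxk] : (0:ℝ) ≤ xk θ 0 i) h0
    · intro i
      apply ciSup_le
      intro k
      simpa using (hxk_bounds θ hθ0 hθ1 k).2 i
  have hz_fix : ∀ θ : ℝ, 0 ≤ θ → θ ≤ 1 → z θ = Φ θ (z θ) := by
    intro θ hθ0 hθ1
    have h1 : Tendsto (fun k => xk θ (k+1)) atTop (𝓝 (z θ)) :=
      (hz_lim θ hθ0 hθ1).comp (Filter.tendsto_add_atTop_nat 1)
    have h2 : Tendsto (fun k => Φ θ (xk θ k)) atTop (𝓝 (Φ θ (z θ))) :=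
      ((hΦcont θ).tendsto (z θ)).comp (hz_lim θ hθ0 hθ1)
    have h3 : (fun k => xk θ (k+1)) = fun k => Φ θ (xk θ k) := funext fun k => hxk_succ θ k
    rw [h3] at h1
    exact tendsto_nhds_unique h1 h2
  -- limits θ → 1
  set θm : ℕ → ℝ := fun m => 1 - 1 / (m + 1) with hθm
  have hθm0 : ∀ m, 0 ≤ θm m := by
    intro m
    rw [hθm]
    have h1 : 1 / ((m:ℝ) + 1) ≤ 1 := by
      rw [div_le_one (by positivity)]
      simp
    simp only
    linarith
  have hθm1 : ∀ m, θm m < 1 := by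
    intro m
    rw [hθm]
    have : 0 < 1 / ((m:ℝ) + 1) := by positivity
    simp only
    linarith
  have hθm_mono : Monotone θm := by
    intro m m' hmm
    rw [hθm]
    simp only
    have h1 : 1 / ((m':ℝ) + 1) ≤ 1 / ((m:ℝ) + 1) := by
      apply div_le_div_of_nonneg_left one_pos.le (by positivity)
      exact_mod_cast by omega
    linarith
  have hθm_lim : Tendsto θm atTop (𝓝 1) := by
    rw [hθm]
    have := tendsto_one_div_add_atTop_nhds_zero_nat (𝕜 := ℝ)
    have h2 := this.const_sub 1
    simpa using h2
  set y : Fin n → ℝ := fun i => ⨆ m, z (θm m) i with hy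
  have hzm_le_xs : ∀ m i, z (θm m) i ≤ xs i := by
    intro m i
    have := (hz_bounds (θm m) (hθm0 m) (hθm1 m).le).2 i
    have h2 : θm m * xs i ≤ xs i := by
      have := hxs_pos i
      nlinarith [hθm0 m, (hθm1 m).le]
    simp only [Pi.smul_apply, smul_eq_mul] at this
    linarith
  have hzm_mono : ∀ m m', m ≤ m' → ∀ i, z (θm m) i ≤ z (θm m') i := by
    intro m m' hmm i
    apply ciSup_le
    intro k
    have h1 : xk (θm m) k ≤ xk (θm m') k :=
      hxk_mono_θ _ _ (hθm0 m) (hθm_mono hmm) (hθm1 m').le k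
    refine le_trans (h1 i) ?_
    have hbdd : BddAbove (Set.range fun k => xk (θm m') k i) := by
      refine ⟨θm m' * xs i, ?_⟩
      rintro r ⟨k', rfl⟩
      simpa [smul_eq_mul] using (hxk_bounds _ (hθm0 m') (hθm1 m').le k').2 i
    exact le_ciSup (f := fun k => xk (θm m') k i) hbdd k
  have hy_lim : Tendsto (fun m => z (θm m)) atTop (𝓝 y) := by
    rw [tendsto_pi_nhds]
    intro i
    apply tendsto_atTop_ciSup
    · exact fun m m' hmm => hzm_mono m m' hmm i
    · refine ⟨xs i, ?_⟩
      rintro r ⟨m, rfl⟩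
      exact hzm_le_xs m i
  have hy_le_xs : y ≤ xs := by
    intro i
    apply ciSup_le
    intro m
    exact hzm_le_xs m i
  have hy_nonneg : 0 ≤ y := by
    intro i
    have h0 := (hz_bounds (θm 0) (hθm0 0) (hθm1 0).le).1 i
    refine le_trans h0 ?_
    have hbdd : BddAbove (Set.range fun m => z (θm m) i) := by
      refine ⟨xs i, ?_⟩
      rintro r ⟨m, rfl⟩
      exact hzm_le_xs m i
    exact le_ciSup (f := fun m => z (θm m) i) hbdd 0
  -- y solves the equation
  have hy_sol : M *ᵥ y = a + b y y := by
    have h1 : Tendsto (fun m => z (θm m)) atTop (𝓝 y) := hy_lim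
    have h2 : Tendsto (fun m => Φ (θm m) (z (θm m))) atTop (𝓝 (M⁻¹ *ᵥ ((1:ℝ) • a + b y y))) := by
      rw [hΦ]
      have hca : Tendsto (fun m => (θm m) • a + b (z (θm m)) (z (θm m))) atTop
          (𝓝 ((1:ℝ) • a + b y y)) := by
        apply Tendsto.add
        · exact (hθm_lim.smul_const a)
        · exact ((bil_cont b).tendsto y).comp h1
      have hmv : Continuous fun u : Fin n → ℝ => M⁻¹ *ᵥ u := by
        have := (Matrix.mulVecLin M⁻¹).continuous_of_finiteDimensional
        exact this
      exact (hmv.tendsto _).comp hca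
    have h3 : (fun m => z (θm m)) = fun m => Φ (θm m) (z (θm m)) :=
      funext fun m => hz_fix (θm m) (hθm0 m) (hθm1 m).le
    rw [h3] at h1
    have h4 : y = M⁻¹ *ᵥ ((1:ℝ) • a + b y y) := tendsto_nhds_unique h1 h2
    calc M *ᵥ y = M *ᵥ (M⁻¹ *ᵥ ((1:ℝ) • a + b y y)) := by rw [← h4]
      _ = (1:ℝ) • a + b y y := hMMinv _
      _ = a + b y y := by rw [one_smul]
  have hy_eq : y = xs := le_antisymm hy_le_xs (hxs_min y hy_nonneg hy_sol)
  -- choose m with xs - z (θm m) ≤ κ • xs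
  set κ : ℝ := (1 - t) / 2 with hκ
  have hκ0 : 0 < κ := by rw [hκ]; linarith
  have hκ1 : κ < 1 := by rw [hκ]; linarith
  have hev : ∀ᶠ m in atTop, ∀ i, xs i - z (θm m) i ≤ κ * xs i := by
    rw [Filter.eventually_all]
    intro i
    have hconv : Tendsto (fun m => z (θm m) i) atTop (𝓝 (xs i)) := by
      have := hy_lim
      rw [tendsto_pi_nhds] at this
      have h2 := this i
      rwa [hy_eq] at h2
    have hgap : xs i - κ * xs i < xs i := by
      have := hxs_pos i
      nlinarith
    filter_upwards [hconv.eventually (eventually_gt_nhds hgap)] with m hm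
    linarith
  obtain ⟨m, hm⟩ := hev.exists
  set θ : ℝ := θm m with hθdef
  set zz : Fin n → ℝ := z (θm m) with hzz
  have hθ0 : 0 ≤ θ := hθm0 m
  have hθ1 : θ < 1 := hθm1 m
  have hzz0 : 0 ≤ zz := (hz_bounds θ hθ0 hθ1.le).1
  have hzzθ : zz ≤ θ • xs := (hz_bounds θ hθ0 hθ1.le).2
  have hzsol : M *ᵥ zz = θ • a + b zz zz := by
    have h4 := hz_fix θ hθ0 hθ1.le
    calc M *ᵥ zz = M *ᵥ (Φ θ zz) := by rw [← h4]
      _ = θ • a + b zz zz := hMMinv _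
  -- the vector d
  set d : Fin n → ℝ := xs - zz with hd
  have hd0 : 0 ≤ d := by
    intro i
    have h1 := hzzθ i
    have h2 : θ * xs i ≤ xs i := by nlinarith [hxs_pos i, hθ0, hθ1.le]
    simp only [hd, Pi.sub_apply, Pi.zero_apply, Pi.smul_apply, smul_eq_mul] at h1 ⊢
    linarith
  have hdκ : ∀ i, d i ≤ κ * xs i := by
    intro i
    have := hm i
    simpa [hd] using this
  have hdlow : ∀ i, (1 - θ) * xs i ≤ d i := by
    intro i
    have h1 := hzzθ i
    simp only [hd, Pi.sub_apply, Pi.smul_apply, smul_eq_mul] at h1 ⊢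
    linarith
  -- key identity
  have hMd : M *ᵥ d = (1 - θ) • a + (Bmat *ᵥ d - b d d) := by
    have h1 : M *ᵥ d = M *ᵥ xs - M *ᵥ zz := by rw [hd, Matrix.mulVec_sub]
    have hBd : Bmat *ᵥ d = b xs d + b d xs := Bmat_mulVec b xs d
    have e1 : b d d = b xs d - b zz d := by rw [hd, map_sub b, LinearMap.sub_apply]
    have e2 : b zz d = b zz xs - b zz zz := by rw [hd, _root_.map_sub (b zz)]
    have e3 : b d xs = b xs xs - b zz xs := by rw [hd, map_sub b, LinearMap.sub_apply]
    funext i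
    have f1 := congrFun e1 i
    have f2 := congrFun e2 i
    have f3 := congrFun e3 i
    simp only [Pi.sub_apply] at f1 f2 f3
    rw [h1, hxs_sol, hzsol]
    simp only [hBd, Pi.add_apply, Pi.sub_apply, Pi.smul_apply, smul_eq_mul]
    linarith
  have hdid : d = (1 - θ) • (M⁻¹ *ᵥ a) + (R *ᵥ d - M⁻¹ *ᵥ (b d d)) := by
    conv_lhs => rw [← hMinvM d, hMd]
    rw [Matrix.mulVec_add, Matrix.mulVec_smul, Matrix.mulVec_sub, hRv]
  set u : Fin n → ℝ := (1 - θ) • (M⁻¹ *ᵥ a) with hu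
  set vv : Fin n → ℝ := R *ᵥ d with hvv
  set qd : Fin n → ℝ := M⁻¹ *ᵥ (b d d) with hqd
  have hu0 : 0 ≤ u := smul_nonneg (by linarith) (mulVec_nonneg hMinvNn ha)
  have hvv0 : 0 ≤ vv := mulVec_nonneg hRnn hd0
  have hqd0 : 0 ≤ qd := mulVec_nonneg hMinvNn (hb d d hd0 hd0)
  have hqdκ : ∀ i, qd i ≤ κ * vv i := by
    intro i
    have h1 : b d d ≤ κ • (Bmat *ᵥ d) := by
      have h2 : b d d ≤ b d (κ • xs) :=
        bil_mono hb hd0 hd0 le_rfl (fun i => by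
          simpa [smul_eq_mul] using hdκ i)
      have h3 : b d (κ • xs) = κ • b d xs := map_smul (b d) κ xs
      have h4 : b d xs ≤ Bmat *ᵥ d := by
        rw [Bmat_mulVec]
        intro i
        have := hb xs d hxs_nonneg hd0 i
        simp only [Pi.add_apply, Pi.zero_apply] at this ⊢
        linarith
      calc b d d ≤ κ • b d xs := by rw [← h3]; exact h2
        _ ≤ κ • (Bmat *ᵥ d) := by
            intro i
            simp only [Pi.smul_apply, smul_eq_mul]
            exact mul_le_mul_of_nonneg_left (h4 i) hκ0.le
    have h5 := mulVec_mono hMinvNn h1 i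
    rw [Matrix.mulVec_smul] at h5
    calc qd i ≤ (κ • (M⁻¹ *ᵥ (Bmat *ᵥ d))) i := h5
      _ = κ * vv i := by rw [Pi.smul_apply, smul_eq_mul, hvv, hRv]
  -- the chain
  have hchain : ∀ i, κ * (1 - θ) * xs i ≤ d i - t * vv i := by
    intro i
    have hid : d i = u i + vv i - qd i := by
      have h0 := congrArg (fun v => v i) hdid
      simp only [Pi.add_apply, Pi.sub_apply] at h0
      linarith [h0]
    have h1 : d i - t * vv i = u i + (1 - t) * vv i - qd i := by
      rw [hid]; ring
    have h2 : qd i ≤ κ * vv i := hqdκ i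
    have h3 : (1 - t) * vv i - κ * vv i = κ * vv i := by rw [hκ]; ring
    have h4 : d i - t * vv i ≥ u i + κ * vv i := by
      rw [h1]
      have := hvv0 i
      simp only [Pi.zero_apply] at this
      nlinarith
    have h5 : u i + κ * vv i ≥ κ * (u i + vv i) := by
      have hui := hu0 i
      simp only [Pi.zero_apply] at hui
      nlinarith
    have h6 : u i + vv i ≥ d i := by
      rw [hid]
      have := hqd0 i
      simp only [Pi.zero_apply] at this
      linarith
    have h7 : κ * (u i + vv i) ≥ κ * d i := mul_le_mul_of_nonneg_left h6 hκ0.le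
    have h8 : κ * d i ≥ κ * ((1 - θ) * xs i) :=
      mul_le_mul_of_nonneg_left (hdlow i) hκ0.le
    calc κ * (1 - θ) * xs i = κ * ((1-θ) * xs i) := by ring
      _ ≤ κ * d i := h8
      _ ≤ κ * (u i + vv i) := h7
      _ ≤ u i + κ * vv i := h5
      _ ≤ d i - t * vv i := h4
  set γ : ℝ := κ * (1 - θ) with hγ
  have hγ0 : 0 < γ := mul_pos hκ0 (by linarith)
  set w : Fin n → ℝ := γ⁻¹ • d with hw
  have hw0 : 0 ≤ w := smul_nonneg (by positivity) hd0
  have hw1 : ∀ i, xs i + t * ((R *ᵥ w) i) ≤ w i := by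
    intro i
    have h1 := hchain i
    have h2 : (R *ᵥ w) i = γ⁻¹ * vv i := by
      rw [hw, Matrix.mulVec_smul, Pi.smul_apply, smul_eq_mul, hvv]
    rw [h2, hw, Pi.smul_apply, smul_eq_mul]
    have h3 : γ⁻¹ * (γ * xs i) ≤ γ⁻¹ * (d i - t * vv i) := by
      apply mul_le_mul_of_nonneg_left _ (by positivity)
      calc γ * xs i = κ * (1 - θ) * xs i := by rw [hγ]
        _ ≤ d i - t * vv i := h1
    rw [inv_mul_cancel_left₀ hγ0.ne'] at h3
    calc xs i + t * (γ⁻¹ * vv i) = xs i + γ⁻¹ * (t * vv i) := by ring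
      _ ≤ γ⁻¹ * (d i - t * vv i) + γ⁻¹ * (t * vv i) := by linarith
      _ = γ⁻¹ * d i := by ring
  have hxsw : ∀ i, xs i ≤ w i := by
    intro i
    have h1 := hw1 i
    have h2 : 0 ≤ (R *ᵥ w) i := mulVec_nonneg hRnn hw0 i
    nlinarith [ht0]
  refine ⟨w, hw0, ?_⟩
  intro k
  induction k with
  | zero =>
    intro i
    simpa [pow_zero, Matrix.one_mulVec] using hxsw i
  | succ k ih =>
    intro i
    have hvk : (fun i => t ^ k * ((R ^ k *ᵥ xs) i)) ≤ w := fun i => ih i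
    have h1 : R ^ (k+1) *ᵥ xs = R *ᵥ (R ^ k *ᵥ xs) := by
      rw [Matrix.mulVec_mulVec, ← pow_succ']
    have h2 : t ^ (k+1) * ((R ^ (k+1) *ᵥ xs) i) = t * ((R *ᵥ (t ^ k • (R ^ k *ᵥ xs))) i) := by
      rw [h1, Matrix.mulVec_smul, Pi.smul_apply, smul_eq_mul, pow_succ']
      ring
    rw [h2]
    have h3 : R *ᵥ (t ^ k • (R ^ k *ᵥ xs)) ≤ R *ᵥ w := by
      apply mulVec_mono hRnn
      intro i'
      simpa [smul_eq_mul] using ih i'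
    have h4 : t * ((R *ᵥ (t ^ k • (R ^ k *ᵥ xs))) i) ≤ t * ((R *ᵥ w) i) :=
      mul_le_mul_of_nonneg_left (h3 i) ht0.le
    have h5 := hw1 i
    have h6 := hxs_pos i
    linarith

end Weight

end QVEAux

/-- If the QVE `M x = a + b(x,x)` has a minimal nonnegative solution `x* > 0`, then
`ρ(M⁻¹(b(x*,·) + b(·,x*))) ≤ 1`, and consequently the derivative
`F'_{x*} = M - b(x*,·) - b(·,x*)` is an M-matrix. -/
theorem qve_derivative_at_minimal_is_MMat {n : ℕ} (M : Matrix (Fin n) (Fin n) ℝ)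
    (hM : IsNsMMat M) (a : Fin n → ℝ) (ha : 0 ≤ a)
    (b : (Fin n → ℝ) →ₗ[ℝ] (Fin n → ℝ) →ₗ[ℝ] (Fin n → ℝ))
    (hb : ∀ x y : Fin n → ℝ, 0 ≤ x → 0 ≤ y → 0 ≤ b x y)
    (xs : Fin n → ℝ) (hxs_nonneg : 0 ≤ xs) (hxs_sol : M *ᵥ xs = a + b xs xs)
    (hxs_min : ∀ s : Fin n → ℝ, 0 ≤ s → M *ᵥ s = a + b s s → xs ≤ s)
    (hxs_pos : ∀ i, 0 < xs i) :
    specRad (M⁻¹ * (LinearMap.toMatrix' (b xs) + LinearMap.toMatrix' (b.flip xs))) ≤ 1 ∧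
    IsMMat (M - LinearMap.toMatrix' (b xs) - LinearMap.toMatrix' (b.flip xs)) := by
  open QVEAux in
  obtain ⟨⟨s, P, hPnn, hsP, hMeq⟩, hdet⟩ := hM
  rcases Nat.eq_zero_or_pos n with hn | hn
  · -- degenerate case n = 0
    subst hn
    haveI hss : Subsingleton (Matrix (Fin 0) (Fin 0) ℂ) := ⟨fun A B => by ext i _; exact i.elim0⟩
    have hspec : ∀ A : Matrix (Fin 0) (Fin 0) ℝ, specRad A = 0 := by
      intro A
      have : {r : ℝ | ∃ μ ∈ spectrum ℂ (A.map (Complex.ofReal)), ‖μ‖ = r} = ∅ := by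
        ext r
        simp only [Set.mem_setOf_eq, Set.mem_empty_iff_false, iff_false]
        rintro ⟨μ, hμ, rfl⟩
        exact (spectrum.mem_iff.mp hμ) (isUnit_of_subsingleton _)
      rw [specRad, this, Real.sSup_empty]
    constructor
    · rw [hspec]; norm_num
    · exact ⟨0, 0, fun i j => le_rfl, by rw [hspec], Subsingleton.elim _ _⟩
  · haveI : Nonempty (Fin n) := ⟨⟨0, hn⟩⟩
    have hs0 : 0 ≤ s := le_trans (specRad_nonneg P) hsP
    obtain ⟨hMinvNn, hWfam⟩ := Minv_family hPnn hsP hMeq hdet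
    have hMM : M * M⁻¹ = 1 := Matrix.mul_nonsing_inv M hdet
    have hMM' : M⁻¹ * M = 1 := Matrix.nonsing_inv_mul M hdet
    set Bmat := LinearMap.toMatrix' (b xs) + LinearMap.toMatrix' (b.flip xs) with hBmat
    set R := M⁻¹ * Bmat with hRdef
    have hBnn : Nn Bmat := Bmat_nn hb hxs_nonneg
    have hRnn : Nn R := mul_nn hMinvNn hBnn
    have hWeight : ∀ t : ℝ, 0 < t → t < 1 →
        ∃ w : Fin n → ℝ, 0 ≤ w ∧ ∀ k i, t ^ k * ((R ^ k *ᵥ xs) i) ≤ w i := fun t ht0 ht1 =>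
      exists_weight hMinvNn hMM hMM' ha hb hxs_nonneg hxs_sol hxs_min hxs_pos ht0 ht1
    have hEig : ∀ μ ∈ spectrum ℂ (R.map Complex.ofReal), ‖μ‖ ≤ 1 := by
      intro μ hμ
      by_contra hgt
      push_neg at hgt
      have hμ0 : 0 < ‖μ‖ := lt_trans one_pos hgt
      have hti : ‖μ‖⁻¹ < 1 := by
        rw [← one_div]
        exact (div_lt_one hμ0).mpr hgt
      have htip : 0 < ‖μ‖⁻¹ := by positivity
      obtain ⟨t, htdef⟩ : ∃ x : ℝ, x = (1 + ‖μ‖⁻¹) / 2 := ⟨_, rfl⟩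
      have ht0 : 0 < t := by rw [htdef]; linarith
      have ht1 : t < 1 := by rw [htdef]; linarith
      obtain ⟨w, hw0, hpow⟩ := hWeight t ht0 ht1
      have hle := eig_le_of_pow_bound hRnn hxs_pos ht0 hpow μ hμ
      have h2 : ‖μ‖⁻¹ < t := by rw [htdef]; linarith
      have h3 : 1 < t * ‖μ‖ := by
        have h4 := mul_lt_mul_of_pos_right h2 hμ0
        rwa [inv_mul_cancel₀ hμ0.ne'] at h4
      linarith
    refine ⟨?_, ?_⟩
    · apply Real.sSup_le _ zero_le_one
      rintro r ⟨μ, hμ, rfl⟩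
      exact hEig μ hμ
    · have hgoalEq : M - LinearMap.toMatrix' (b xs) - LinearMap.toMatrix' (b.flip xs)
          = s • (1 : Matrix (Fin n) (Fin n) ℝ) - (P + Bmat) := by
        rw [hMeq, hBmat]
        abel
      refine ⟨s, P + Bmat, fun i j => add_nonneg (hPnn i j) (hBnn i j), ?_, hgoalEq⟩
      apply Real.sSup_le _ hs0
      rintro r ⟨μ, hμ, rfl⟩
      apply le_of_forall_pos_le_add
      intro ε hε
      obtain ⟨Wε, hWε1, hWε2, hWεnn, hWεle⟩ := hWfam ε hε
      obtain ⟨r', hr'⟩ : ∃ x : ℝ, x = (s + ε/2) / (s + ε) := ⟨_, rfl⟩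
      have hr'0 : 0 ≤ r' := by
        rw [hr']
        apply div_nonneg <;> linarith
      have hr'1 : r' < 1 := by
        rw [hr', div_lt_one (by linarith)]
        linarith
      set Gε := Wε * Bmat with hGε
      have hGnn : Nn Gε := mul_nn hWεnn hBnn
      have hGle : Mle Gε (r' • R) := by
        intro i j
        have h := mul_mono hWεnn hBnn hWεle (fun i j => le_rfl) i j
        calc Gε i j ≤ ((r' • M⁻¹) * Bmat) i j := by rw [hr']; exact h
          _ = (r' • R) i j := by rw [smul_mul_assoc, hRdef]
      obtain ⟨t0, ht0def⟩ : ∃ x : ℝ, x = (r' + 1) / 2 := ⟨_, rfl⟩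
      have ht00 : 0 < t0 := by rw [ht0def]; linarith
      have ht01 : t0 < 1 := by rw [ht0def]; linarith
      have hrt : r' < t0 := by rw [ht0def]; linarith
      obtain ⟨w, hw0, hpow⟩ := hWeight t0 ht00 ht01
      obtain ⟨Cr, hCr⟩ : ∃ x : ℝ, x = (∑ i, w i + 1) * (∑ j, (xs j)⁻¹ + 1) := ⟨_, rfl⟩
      have hCr0 : 0 < Cr := by
        rw [hCr]
        have h1 : (0:ℝ) ≤ ∑ i, w i := Finset.sum_nonneg fun i _ => hw0 i
        have h2 : (0:ℝ) ≤ ∑ j, (xs j)⁻¹ :=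
          Finset.sum_nonneg fun j _ => (inv_nonneg).mpr (hxs_pos j).le
        nlinarith
      have hRk : ∀ k i j, (R ^ k) i j ≤ Cr * (1/t0) ^ k := by
        intro k i j
        have h1 : (R ^ k) i j * xs j ≤ (R ^ k *ᵥ xs) i := by
          have : (R ^ k *ᵥ xs) i = ∑ j', (R ^ k) i j' * xs j' := by
            simp [Matrix.mulVec, dotProduct]
          rw [this]
          exact Finset.single_le_sum (f := fun j' => (R ^ k) i j' * xs j')
            (fun j' _ => mul_nonneg (pow_nn hRnn k i j') (hxs_pos j').le) (Finset.mem_univ j)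
        have h2 : t0 ^ k * ((R ^ k *ᵥ xs) i) ≤ w i := hpow k i
        have h3 : (R ^ k) i j ≤ w i / (xs j * t0 ^ k) := by
          rw [le_div_iff₀ (mul_pos (hxs_pos j) (pow_pos ht00 k))]
          calc (R ^ k) i j * (xs j * t0 ^ k) = t0 ^ k * ((R ^ k) i j * xs j) := by ring
            _ ≤ t0 ^ k * ((R ^ k *ᵥ xs) i) :=
                mul_le_mul_of_nonneg_left h1 (pow_pos ht00 k).le
            _ ≤ w i := h2
        have h4 : w i / (xs j * t0 ^ k) ≤ Cr * (1/t0) ^ k := by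
          rw [div_eq_mul_inv, mul_inv, one_div, inv_pow]
          have h5 : w i ≤ ∑ i', w i' + 1 := by
            have := Finset.single_le_sum (f := fun i' => w i') (fun i' _ => hw0 i')
              (Finset.mem_univ i)
            linarith
          have h6 : (xs j)⁻¹ ≤ ∑ j', (xs j')⁻¹ + 1 := by
            have := Finset.single_le_sum (f := fun j' => (xs j')⁻¹)
              (fun j' _ => (inv_nonneg).mpr (hxs_pos j').le) (Finset.mem_univ j)
            linarith
          calc w i * ((xs j)⁻¹ * (t0 ^ k)⁻¹)
              = (w i * (xs j)⁻¹) * (t0 ^ k)⁻¹ := by ring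
            _ ≤ ((∑ i', w i' + 1) * (∑ j', (xs j')⁻¹ + 1)) * (t0 ^ k)⁻¹ := by
                apply mul_le_mul_of_nonneg_right _ ((inv_nonneg).mpr (pow_pos ht00 k).le)
                apply mul_le_mul h5 h6 ((inv_nonneg).mpr (hxs_pos j).le)
                have hsw : (0:ℝ) ≤ ∑ i', w i' := Finset.sum_nonneg fun i' _ => hw0 i'
                linarith
            _ = Cr * (t0 ^ k)⁻¹ := by rw [hCr]
        exact le_trans h3 h4
      have hq0 : 0 ≤ r' / t0 := div_nonneg hr'0 ht00.le
      have hq1 : r' / t0 < 1 := by rw [div_lt_one ht00]; exact hrt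
      have hGk : ∀ k i j, |(Gε ^ k) i j| ≤ Cr * (r'/t0) ^ k := by
        intro k i j
        have h1 : (Gε ^ k) i j ≤ ((r' • R) ^ k) i j := pow_mono hGnn hGle k i j
        have h2 : ((r' • R) ^ k) i j = r' ^ k * (R ^ k) i j := by
          rw [smul_pow, Matrix.smul_apply, smul_eq_mul]
        have h3 : r' ^ k * (R ^ k) i j ≤ r' ^ k * (Cr * (1/t0) ^ k) :=
          mul_le_mul_of_nonneg_left (hRk k i j) (pow_nonneg hr'0 k)
        have h4 : r' ^ k * (Cr * (1/t0) ^ k) = Cr * (r'/t0) ^ k := by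
          rw [show ((1:ℝ)/t0) ^ k = (t0 ^ k)⁻¹ by rw [one_div, inv_pow],
            show (r'/t0) ^ k = r' ^ k * (t0 ^ k)⁻¹ by rw [div_pow, div_eq_mul_inv]]
          ring
        rw [abs_of_nonneg (pow_nn hGnn k i j)]
        calc (Gε ^ k) i j ≤ r' ^ k * (R ^ k) i j := by rw [h2] at h1; exact h1
          _ ≤ r' ^ k * (Cr * (1/t0) ^ k) := h3
          _ = Cr * (r'/t0) ^ k := h4
      obtain ⟨Wg, hg1, hg2, hgf⟩ := neumann Gε Cr (r'/t0) hq0 hq1 hGk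
      have hWgnn : Nn Wg := by
        intro i j
        rw [hgf i j]
        exact tsum_nonneg fun k => pow_nn hGnn k i j
      have hA0 : (s+ε) • (1 : Matrix (Fin n) (Fin n) ℝ) - (P + Bmat)
          = (M + ε • (1 : Matrix (Fin n) (Fin n) ℝ)) - Bmat := by
        rw [hMeq, add_smul]
        abel
      have hA1 : (M + ε • (1 : Matrix (Fin n) (Fin n) ℝ)) - Bmat
          = (M + ε • (1 : Matrix (Fin n) (Fin n) ℝ)) * (1 - Gε) := by
        rw [Matrix.mul_sub, Matrix.mul_one, hGε, ← Matrix.mul_assoc, hWε1, Matrix.one_mul]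
      have hWA : (Wg * Wε) * ((s+ε) • (1 : Matrix (Fin n) (Fin n) ℝ) - (P + Bmat)) = 1 := by
        rw [hA0, hA1, Matrix.mul_assoc Wg Wε _, ← Matrix.mul_assoc Wε _ _, hWε2,
          Matrix.one_mul, hg1]
      have := eig_le_of_inv (N := P + Bmat) (fun i j => add_nonneg (hPnn i j) (hBnn i j))
        (mul_nn hWgnn hWεnn) hWA μ hμ
      linarith
end

section
/- Suppose the QVE Mx = a + b(x,x) has a minimal nonnegative solution x* with x* > 0. If F'_{x*} is nonsingular, then F'_x is a nonsingular M-matrix for every x with 0 ≤ x ≤ x*. If F'_{x*} is irreducible, then F'_x is a nonsingular M-matrix for every x with 0 ≤ x ≤ x* and F'_x ≠ F'_{x*}. -/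
open Matrix Filter Topology

/-- A square matrix is irreducible if the directed graph on the indices, with an edge
from `i` to `j` whenever `A i j ≠ 0`, is strongly connected. -/
def IsIrred {n : ℕ} (A : Matrix (Fin n) (Fin n) ℝ) : Prop :=
  ∀ i j : Fin n, i ≠ j → Relation.TransGen (fun p q => A p q ≠ 0) i j

namespace QVE


variable {n : ℕ}

lemma mulVec_nonneg {Q : Matrix (Fin n) (Fin n) ℝ} (hQ : ∀ i j, 0 ≤ Q i j)
    {z : Fin n → ℝ} (hz : 0 ≤ z) : 0 ≤ Q *ᵥ z := by
  refine Pi.le_def.mpr fun i => ?_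
  simp only [Matrix.mulVec, dotProduct, Pi.zero_apply]
  exact Finset.sum_nonneg fun j _ => mul_nonneg (hQ i j) (hz j)

lemma mulVec_mono {Q : Matrix (Fin n) (Fin n) ℝ} (hQ : ∀ i j, 0 ≤ Q i j)
    {z z' : Fin n → ℝ} (h : z ≤ z') : Q *ᵥ z ≤ Q *ᵥ z' := by
  have h0 : 0 ≤ z' - z := fun i => by have := h i; simp; linarith
  have := mulVec_nonneg hQ h0
  have h2 : Q *ᵥ (z' - z) = Q *ᵥ z' - Q *ᵥ z := Matrix.mulVec_sub Q z' z
  intro i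
  have := this i
  rw [h2] at this
  simp only [Pi.sub_apply, Pi.zero_apply] at this
  linarith

lemma ent_mul {A B : Matrix (Fin n) (Fin n) ℝ} (hA : ∀ i j, 0 ≤ A i j)
    (hB : ∀ i j, 0 ≤ B i j) : ∀ i j, 0 ≤ (A * B) i j := by
  intro i j
  rw [Matrix.mul_apply]
  exact Finset.sum_nonneg fun k _ => mul_nonneg (hA i k) (hB k j)

lemma ent_pow {A : Matrix (Fin n) (Fin n) ℝ} (hA : ∀ i j, 0 ≤ A i j) (k : ℕ) :
    ∀ i j, 0 ≤ (A ^ k) i j := by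
  induction k with
  | zero => intro i j; simp [Matrix.one_apply]; split <;> norm_num
  | succ m ih => rw [pow_succ]; exact ent_mul ih hA

/-- eigen extraction over ℂ -/
lemma abs_eig {Qr : Matrix (Fin n) (Fin n) ℝ} (hQ : ∀ i j, 0 ≤ Qr i j) {μ : ℂ}
    (hμ : μ ∈ spectrum ℂ (Qr.map Complex.ofReal)) :
    ∃ u : Fin n → ℝ, 0 ≤ u ∧ u ≠ 0 ∧ ‖μ‖ • u ≤ Qr *ᵥ u := by
  rw [spectrum.mem_iff] at hμ
  rw [Algebra.algebraMap_eq_smul_one] at hμ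
  set C := μ • (1 : Matrix (Fin n) (Fin n) ℂ) - Qr.map Complex.ofReal with hC
  have hdet : C.det = 0 := by
    by_contra h
    exact hμ ((Matrix.isUnit_iff_isUnit_det C).mpr (isUnit_iff_ne_zero.mpr h))
  obtain ⟨w, hw0, hw⟩ := (Matrix.exists_mulVec_eq_zero_iff).mpr hdet
  have heig : Qr.map Complex.ofReal *ᵥ w = μ • w := by
    have : C *ᵥ w = μ • w - Qr.map Complex.ofReal *ᵥ w := by
      rw [hC, Matrix.sub_mulVec, Matrix.smul_mulVec, Matrix.one_mulVec]
    rw [this] at hw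
    linear_combination (norm := module) -hw
  refine ⟨fun i => ‖w i‖, fun i => norm_nonneg _, ?_, ?_⟩
  · obtain ⟨i, hi⟩ := Function.ne_iff.mp hw0
    exact Function.ne_iff.mpr ⟨i, by simpa using hi⟩
  · intro i
    have h1 : (Qr.map Complex.ofReal *ᵥ w) i = ∑ j, (Qr i j : ℂ) * w j := by
      simp [Matrix.mulVec, dotProduct, Matrix.map_apply]
    have h2 : ‖μ‖ * ‖w i‖ = ‖∑ j, (Qr i j : ℂ) * w j‖ := by
      rw [← h1, heig]
      simp [norm_mul]
    calc (‖μ‖ • fun i => ‖w i‖) i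
        = ‖∑ j, (Qr i j : ℂ) * w j‖ := by simpa using h2
      _ ≤ ∑ j, ‖(Qr i j : ℂ) * w j‖ := norm_sum_le _ _
      _ = ∑ j, Qr i j * ‖w j‖ := by
          refine Finset.sum_congr rfl fun j _ => ?_
          rw [norm_mul, Complex.norm_real, Real.norm_eq_abs, abs_of_nonneg (hQ i j)]
      _ = (Qr *ᵥ fun i => ‖w i‖) i := by
          simp [Matrix.mulVec, dotProduct]

/-- irreducible + stable set ⇒ everything -/
lemma irred_stable {A : Matrix (Fin n) (Fin n) ℝ}
    (hA : ∀ i j : Fin n, i ≠ j → Relation.TransGen (fun p q => A p q ≠ 0) i j)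
    (p : Fin n → Prop) (hne : ∃ j, p j)
    (hstab : ∀ i j, ¬ p i → p j → i ≠ j → A i j = 0) :
    ∀ i, p i := by
  intro i
  by_contra hi
  obtain ⟨j, hj⟩ := hne
  have hij : i ≠ j := fun h => hi (h ▸ hj)
  have key : ∀ q, Relation.TransGen (fun p q => A p q ≠ 0) i q → ¬ p q := by
    intro q hq
    induction hq with
    | single h =>
        intro hpq
        exact h (hstab i _ hi hpq (fun he => hi (he ▸ hpq)))
    | @tail c q _ h ih =>
        intro hpq
        exact h (hstab c q ih hpq (fun he => ih (he ▸ hpq)))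
  exact key j (hA i j hij) hj

/-- determinant vanishes given a block-triangular structure and partial kernel vector -/
lemma det_block {A : Matrix (Fin n) (Fin n) ℝ} (p : Fin n → Prop) [DecidablePred p]
    (h0 : ∀ i j, ¬ p i → p j → A i j = 0)
    (U : Fin n → ℝ) (hU : ∃ i, ¬ p i ∧ U i ≠ 0)
    (hker : ∀ i, ¬ p i → ∑ j ∈ Finset.univ.filter (fun j => ¬ p j), A i j * U j = 0) :
    A.det = 0 := by
  classical
  set e := Equiv.sumCompl p
  set B := A.submatrix e e with hB
  have hdet : B.det = A.det := Matrix.det_submatrix_equiv_self e A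
  have h21 : B.toBlocks₂₁ = 0 := by
    ext i j
    simp only [Matrix.toBlocks₂₁, Matrix.of_apply, Matrix.zero_apply, hB,
      Matrix.submatrix_apply]
    simp only [e, Equiv.sumCompl_apply_inr, Equiv.sumCompl_apply_inl]
    exact h0 _ _ i.2 j.2
  have hblocks : B = Matrix.fromBlocks B.toBlocks₁₁ B.toBlocks₁₂ 0 B.toBlocks₂₂ := by
    rw [← h21, Matrix.fromBlocks_toBlocks B]
  have hD : B.toBlocks₂₂.det = 0 := by
    rw [← Matrix.exists_mulVec_eq_zero_iff]
    obtain ⟨i0, hi0, hUi0⟩ := hU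
    refine ⟨fun i => U i.1, Function.ne_iff.mpr ⟨⟨i0, hi0⟩, hUi0⟩, ?_⟩
    funext i
    have : ∀ x : Fin n, x ∈ Finset.univ.filter (fun j => ¬ p j) ↔ ¬ p x := by
      intro x; simp
    calc (B.toBlocks₂₂ *ᵥ fun i => U i.1) i
        = ∑ j : {x // ¬ p x}, A i.1 j.1 * U j.1 := by
          simp [Matrix.toBlocks₂₂, Matrix.mulVec, dotProduct, hB,
            Matrix.submatrix_apply, e]
      _ = ∑ j ∈ Finset.univ.filter (fun j => ¬ p j), A i.1 j * U j := by
          rw [← Finset.sum_subtype _ this (fun j => A i.1 j * U j)]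
      _ = 0 := hker i.1 i.2
  rw [← hdet, hblocks, Matrix.det_fromBlocks_zero₂₁, hD, mul_zero]



variable {n : ℕ}

lemma A1_ent {t : ℝ} (ht : 0 < t) {Q : Matrix (Fin n) (Fin n) ℝ}
    (hQ : ∀ i j, 0 ≤ Q i j) :
    ∀ i j, 0 ≤ (t • (1 : Matrix (Fin n) (Fin n) ℝ) + Q) i j := by
  intro i j
  simp only [Matrix.add_apply, Matrix.smul_apply, Matrix.one_apply, smul_eq_mul]
  split <;> [nlinarith [hQ i j]; simpa using hQ i j]

lemma A1_mulVec {t : ℝ} {Q : Matrix (Fin n) (Fin n) ℝ} (v : Fin n → ℝ) :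
    (t • (1 : Matrix (Fin n) (Fin n) ℝ) + Q) *ᵥ v = t • v + Q *ᵥ v := by
  rw [Matrix.add_mulVec, Matrix.smul_mulVec, Matrix.one_mulVec]

lemma pow_mulVec_lower {t : ℝ} (ht : 0 < t) {Q : Matrix (Fin n) (Fin n) ℝ}
    (hQ : ∀ i j, 0 ≤ Q i j) (k : ℕ) (z : Fin n → ℝ) (hz : 0 ≤ z) :
    t ^ k • z ≤ (t • (1 : Matrix (Fin n) (Fin n) ℝ) + Q) ^ k *ᵥ z := by
  induction k with
  | zero => simp [Matrix.one_mulVec]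
  | succ m ih =>
      set A1 := t • (1 : Matrix (Fin n) (Fin n) ℝ) + Q with hA1
      have h1 : A1 ^ (m + 1) *ᵥ z = A1 *ᵥ (A1 ^ m *ᵥ z) := by
        rw [pow_succ', ← Matrix.mulVec_mulVec]
      have h2 : 0 ≤ A1 ^ m *ᵥ z := mulVec_nonneg (ent_pow (A1_ent ht hQ) m) hz
      intro i
      have h3 := mulVec_nonneg hQ h2 i
      have h4 := ih i
      have h5 : (A1 *ᵥ (A1 ^ m *ᵥ z)) i = t * (A1 ^ m *ᵥ z) i + (Q *ᵥ (A1 ^ m *ᵥ z)) i := by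
        rw [A1_mulVec]; simp
      simp only [Pi.smul_apply, smul_eq_mul] at h4 ⊢
      rw [h1, h5]
      have : t ^ (m+1) * z i = t * (t ^ m * z i) := by ring
      rw [this]
      have := h2 i
      simp only [Pi.zero_apply] at h3 this
      nlinarith

lemma supp_stab {t : ℝ} (ht : 0 < t) {Q : Matrix (Fin n) (Fin n) ℝ}
    (hQ : ∀ i j, 0 ≤ Q i j) (z : Fin n → ℝ) (hz : 0 ≤ z) :
    ∀ i j, (((t • (1 : Matrix (Fin n) (Fin n) ℝ) + Q) ^ n *ᵥ z) i = 0) →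
      0 < ((t • (1 : Matrix (Fin n) (Fin n) ℝ) + Q) ^ n *ᵥ z) j → Q i j = 0 := by
  classical
  set A1 := t • (1 : Matrix (Fin n) (Fin n) ℝ) + Q with hA1
  set w : ℕ → Fin n → ℝ := fun k => A1 ^ k *ᵥ z with hwdef
  have hw0 : ∀ k, 0 ≤ w k := fun k => mulVec_nonneg (ent_pow (A1_ent ht hQ) k) hz
  have hws : ∀ k, w (k + 1) = A1 *ᵥ w k := by
    intro k
    show A1 ^ (k+1) *ᵥ z = A1 *ᵥ (A1 ^ k *ᵥ z)
    rw [pow_succ', ← Matrix.mulVec_mulVec]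
  have hval : ∀ k i, w (k+1) i = t * w k i + ∑ j, Q i j * w k j := by
    intro k i
    rw [hws, A1_mulVec]
    simp [Matrix.mulVec, dotProduct]
  set S : ℕ → Finset (Fin n) := fun k => Finset.univ.filter (fun i => 0 < w k i) with hSdef
  set F : Finset (Fin n) → Finset (Fin n) :=
    fun s => s ∪ Finset.univ.filter (fun i => ∃ j ∈ s, 0 < Q i j) with hFdef
  have hSF : ∀ k, S (k+1) = F (S k) := by
    intro k
    ext i
    simp only [hSdef, hFdef, Finset.mem_union, Finset.mem_filter, Finset.mem_univ, true_and]
    constructor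
    · intro hpos
      by_contra hcon
      push_neg at hcon
      obtain ⟨h1, h2⟩ := hcon
      have hwi : w k i = 0 := le_antisymm h1 (hw0 k i)
      have hterm : ∀ j, Q i j * w k j = 0 := by
        intro j
        by_cases hj : 0 < w k j
        · have h3 := h2 j hj
          have : Q i j = 0 := le_antisymm h3 (hQ i j)
          rw [this, zero_mul]
        · have : w k j = 0 := le_antisymm (not_lt.mp hj) (hw0 k j)
          rw [this, mul_zero]
      have : w (k+1) i = 0 := by
        rw [hval k i, hwi]
        simp [Finset.sum_eq_zero fun j _ => hterm j]
      exact absurd this (ne_of_gt hpos)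
    · intro h
      have hsum : 0 ≤ ∑ j, Q i j * w k j :=
        Finset.sum_nonneg fun j _ => mul_nonneg (hQ i j) (hw0 k j)
      rcases h with h | ⟨j, hj, hQij⟩
      · rw [hval k i]; nlinarith
      · have hterm : 0 < Q i j * w k j := mul_pos hQij hj
        have hle : Q i j * w k j ≤ ∑ j', Q i j' * w k j' :=
          Finset.single_le_sum (fun j' _ => mul_nonneg (hQ i j') (hw0 k j')) (Finset.mem_univ j)
        have := mul_nonneg ht.le (hw0 k i)
        rw [hval k i]; nlinarith
  have hmono : ∀ k, S k ⊆ S (k+1) := by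
    intro k; rw [hSF]; exact Finset.subset_union_left
  have hpersist : ∀ k, S (k+1) = S k → ∀ m, k ≤ m → S (m+1) = S m := by
    intro k hk m hm
    induction m, hm using Nat.le_induction with
    | base => exact hk
    | succ m hm ih => rw [hSF (m+1), ih, ← hSF m]; exact ih
  have hex : ∃ k, k ≤ n ∧ S (k+1) = S k := by
    by_contra h
    push_neg at h
    have hcard : ∀ k, k ≤ n + 1 → k ≤ (S k).card := by
      intro k hk
      induction k with
      | zero => simp
      | succ m ih =>
          have hm : m ≤ n := by omega
          have h1 : S m ⊂ S (m+1) :=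
            (hmono m).ssubset_of_ne (fun he => h m hm he.symm)
          have h2 := Finset.card_lt_card h1
          have h3 := ih (by omega)
          omega
    have h4 := hcard (n+1) le_rfl
    have h5 := Finset.card_le_univ (S (n+1))
    simp only [Finset.card_univ, Fintype.card_fin] at h5
    omega
  obtain ⟨k, hk, heq⟩ := hex
  have hfin : S (n+1) = S n := hpersist k heq n hk
  intro i j hi hj
  by_contra hQij
  have hQpos : 0 < Q i j := lt_of_le_of_ne (hQ i j) (Ne.symm hQij)
  have hiS : i ∈ S (n+1) := by
    rw [hSF]
    refine Finset.mem_union_right _ ?_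
    simp only [Finset.mem_filter, Finset.mem_univ, true_and]
    exact ⟨j, by simp only [hSdef, Finset.mem_filter, Finset.mem_univ, true_and]; exact hj, hQpos⟩
  rw [hfin] at hiS
  simp only [hSdef, Finset.mem_filter, Finset.mem_univ, true_and] at hiS
  exact absurd hi (ne_of_gt hiS)



variable {n : ℕ}

lemma hrep (v : Fin n → ℝ) : v = ∑ j, v j • (Pi.single j 1 : Fin n → ℝ) := by
  funext i
  rw [Finset.sum_apply]
  simp [Pi.single_apply]

lemma hbilin (b : (Fin n → ℝ) →ₗ[ℝ] (Fin n → ℝ) →ₗ[ℝ] (Fin n → ℝ)) (z w : Fin n → ℝ) :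
    b z w = ∑ j, ∑ k, (z j * w k) • b (Pi.single j 1 : Fin n → ℝ) ((Pi.single k 1 : Fin n → ℝ)) := by
  calc b z w = b (∑ j, z j • (Pi.single j 1 : Fin n → ℝ)) w := by rw [← hrep z]
    _ = ∑ j, (z j) • (b (Pi.single j 1 : Fin n → ℝ) w) := by
        rw [map_sum b _ Finset.univ, LinearMap.sum_apply]
        exact Finset.sum_congr rfl fun j _ => by rw [_root_.map_smul, LinearMap.smul_apply]
    _ = ∑ j, ∑ k, (z j * w k) • b (Pi.single j 1 : Fin n → ℝ) ((Pi.single k 1 : Fin n → ℝ)) := by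
        refine Finset.sum_congr rfl fun j _ => ?_
        nth_rewrite 1 [hrep w]
        rw [map_sum, Finset.smul_sum]
        refine Finset.sum_congr rfl fun k _ => ?_
        rw [_root_.map_smul, smul_smul]

lemma supersol (M : Matrix (Fin n) (Fin n) ℝ)
    (a : Fin n → ℝ) (ha : 0 ≤ a)
    (b : (Fin n → ℝ) →ₗ[ℝ] (Fin n → ℝ) →ₗ[ℝ] (Fin n → ℝ))
    (hb : ∀ x y : Fin n → ℝ, 0 ≤ x → 0 ≤ y → 0 ≤ b x y)
    (xs : Fin n → ℝ)
    (hxs_min : ∀ s : Fin n → ℝ, 0 ≤ s → M *ᵥ s = a + b s s → xs ≤ s)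
    (t : ℝ) (ht : 0 < t) (P : Matrix (Fin n) (Fin n) ℝ) (hP0 : ∀ i j, 0 ≤ P i j)
    (hMeq : M = t • (1 : Matrix (Fin n) (Fin n) ℝ) - P)
    (y : Fin n → ℝ) (hy0 : 0 ≤ y) (hsup : a + b y y ≤ M *ᵥ y) : xs ≤ y := by
  classical
  set γ : ℝ := (1 + t)⁻¹ with hγdef
  have hγ : 0 < γ := by positivity
  have hMii : ∀ i, γ * M i i ≤ 1 := by
    intro i
    have h1 : M i i = t - P i i := by
      rw [hMeq]; simp [Matrix.sub_apply, Matrix.one_apply]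
    have h2 : M i i ≤ t := by rw [h1]; linarith [hP0 i i]
    have h3 : γ * (1 + t) = 1 := by
      rw [hγdef]; field_simp
    nlinarith
  have hMoff : ∀ i j, i ≠ j → M i j ≤ 0 := by
    intro i j hij
    rw [hMeq]
    simp [Matrix.sub_apply, Matrix.one_apply_ne hij]
    exact hP0 i j
  have hlin : ∀ d : Fin n → ℝ, 0 ≤ d → ∀ i, 0 ≤ d i - γ * (M *ᵥ d) i := by
    intro d hd i
    have hsplit : (M *ᵥ d) i = M i i * d i + ∑ j ∈ Finset.univ.erase i, M i j * d j := by
      rw [Matrix.mulVec, dotProduct]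
      exact (Finset.add_sum_erase Finset.univ (fun j => M i j * d j) (Finset.mem_univ i)).symm
    have hsum : ∑ j ∈ Finset.univ.erase i, M i j * d j ≤ 0 :=
      Finset.sum_nonpos fun j hj =>
        mul_nonpos_of_nonpos_of_nonneg (hMoff i j (Finset.ne_of_mem_erase hj).symm) (hd j)
    have h1 := hMii i
    have h2 := hd i
    rw [hsplit]
    nlinarith [mul_nonneg (sub_nonneg.mpr h1) h2,
      mul_nonpos_of_nonneg_of_nonpos hγ.le hsum]
  set G : (Fin n → ℝ) → (Fin n → ℝ) := fun z => z + γ • (a + b z z - M *ᵥ z) with hGdef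
  have hGval : ∀ z i, G z i = z i + γ * (a i + (b z z) i - (M *ᵥ z) i) := by
    intro z i; simp [hGdef]
  have hbexpand : ∀ z d : Fin n → ℝ, b (z + d) (z + d)
      = b z z + (b z d + b d z + b d d) := by
    intro z d
    have h1 : b (z + d) = b z + b d := map_add b z d
    rw [h1]
    simp only [LinearMap.add_apply, map_add]
    abel
  have hGmono : ∀ z z', 0 ≤ z → z ≤ z' → G z ≤ G z' := by
    intro z z' hz hle
    set d := z' - z with hd
    have hd0 : 0 ≤ d := by
      intro i; simp only [hd, Pi.sub_apply, Pi.zero_apply]; linarith [hle i]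
    have hz'd : z' = z + d := by simp [hd]
    intro i
    have hbb : b z' z' = b z z + (b z d + b d z + b d d) := by
      rw [hz'd]; exact hbexpand z d
    have hM' : (M *ᵥ z') = M *ᵥ z + M *ᵥ d := by rw [hz'd, Matrix.mulVec_add]
    have key : G z' i - G z i
        = (d i - γ * (M *ᵥ d) i) + γ * ((b z d) i + (b d z) i + (b d d) i) := by
      rw [hGval, hGval, hbb, hM', hz'd]
      simp only [Pi.add_apply]
      ring
    have h1 := hlin d hd0 i
    have h2 := hb z d hz hd0 i
    have h3 := hb d z hd0 hz i
    have h4 := hb d d hd0 hd0 i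
    simp only [Pi.zero_apply] at h2 h3 h4
    nlinarith [mul_nonneg hγ.le (by linarith : (0:ℝ) ≤ (b z d) i + (b d z) i + (b d d) i)]
  have hGpos : ∀ z, 0 ≤ z → 0 ≤ G z := by
    intro z hz i
    have key : G z i = (z i - γ * (M *ᵥ z) i) + γ * (a i + (b z z) i) := by
      rw [hGval]; ring
    have h1 := hlin z hz i
    have h2 := ha i
    have h3 := hb z z hz hz i
    simp only [Pi.zero_apply] at h2 h3 ⊢
    nlinarith [mul_nonneg hγ.le (by linarith : (0:ℝ) ≤ a i + (b z z) i)]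
  have hGy : G y ≤ y := by
    intro i
    have h1 := hsup i
    simp only [Pi.add_apply] at h1
    rw [hGval]
    nlinarith [mul_nonneg hγ.le (by linarith : (0:ℝ) ≤ (M *ᵥ y) i - (a i + (b y y) i))]
  set seq : ℕ → (Fin n → ℝ) := fun k => G^[k] y with hseqdef
  have hseqsucc : ∀ k, seq (k+1) = G (seq k) := fun k => Function.iterate_succ_apply' G k y
  have hchain : ∀ k, 0 ≤ seq k ∧ seq (k+1) ≤ seq k := by
    intro k
    induction k with
    | zero =>
        constructor
        · simpa [hseqdef] using hy0
        · have : seq 1 = G y := by simp [hseqdef]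
          rw [this]; simpa [hseqdef] using hGy
    | succ m ih =>
        have h0 : 0 ≤ seq (m+1) := by
          rw [hseqsucc m]; exact hGpos _ ih.1
        refine ⟨h0, ?_⟩
        have h0' : 0 ≤ G (seq m) := hseqsucc m ▸ h0
        have hle' : G (seq m) ≤ seq m := hseqsucc m ▸ ih.2
        rw [hseqsucc (m+1), hseqsucc m]
        exact hGmono _ _ h0' hle'
  set L : Fin n → ℝ := fun i => ⨅ k, seq k i with hLdef
  have hanti : ∀ i, Antitone fun k => seq k i :=
    fun i => antitone_nat_of_succ_le fun k => (hchain k).2 i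
  have hbdd : ∀ i, BddBelow (Set.range fun k => seq k i) :=
    fun i => ⟨0, fun r ⟨k, hk⟩ => hk ▸ (hchain k).1 i⟩
  have htend : Tendsto seq atTop (𝓝 L) :=
    tendsto_pi_nhds.mpr fun i => tendsto_atTop_ciInf (hanti i) (hbdd i)
  have hcb : Continuous fun z : Fin n → ℝ => b z z := by
    have heq : (fun z : Fin n → ℝ => b z z)
        = fun z => ∑ j, ∑ k, (z j * z k) • b (Pi.single j 1 : Fin n → ℝ) ((Pi.single k 1 : Fin n → ℝ)) :=
      funext fun z => hbilin b z z
    rw [heq]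
    refine continuous_finset_sum _ fun j _ => continuous_finset_sum _ fun k _ => ?_
    exact ((continuous_apply j).mul (continuous_apply k)).smul continuous_const
  have hcM : Continuous fun z : Fin n → ℝ => M *ᵥ z := by
    have heq : (fun z : Fin n → ℝ => M *ᵥ z) = fun z => M.mulVecLin z := by
      funext z; simp [Matrix.mulVecLin_apply]
    rw [heq]
    exact LinearMap.continuous_of_finiteDimensional _
  have hGcont : Continuous G := by
    rw [hGdef]
    exact continuous_id.add (((continuous_const.add hcb).sub hcM).const_smul γ)
  have h1 : Tendsto (fun k => seq (k+1)) atTop (𝓝 L) :=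
    (Filter.tendsto_add_atTop_iff_nat 1).mpr htend
  have h2 : Tendsto (fun k => G (seq k)) atTop (𝓝 (G L)) := (hGcont.tendsto L).comp htend
  have h2' : Tendsto (fun k => seq (k+1)) atTop (𝓝 (G L)) := by
    have : (fun k => seq (k+1)) = fun k => G (seq k) := funext hseqsucc
    rw [this]; exact h2
  have hfix : G L = L := tendsto_nhds_unique h2' h1
  have hE : a + b L L - M *ᵥ L = 0 := by
    have hsm : γ • (a + b L L - M *ᵥ L) = 0 := by
      have h3 : L + γ • (a + b L L - M *ᵥ L) = L := hfix
      linear_combination (norm := module) h3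
    rcases smul_eq_zero.mp hsm with h | h
    · exact absurd h (ne_of_gt hγ)
    · exact h
  have hLsol : M *ᵥ L = a + b L L := (sub_eq_zero.mp hE).symm
  have hL0 : 0 ≤ L := fun i => le_ciInf fun k => (hchain k).1 i
  have hLy : L ≤ y := fun i => ciInf_le (hbdd i) 0
  exact le_trans (hxs_min L hL0 hLsol) hLy


end QVE
set_option maxHeartbeats 1000000 in
open QVE in
/-- Suppose the QVE `M x = a + b(x,x)` has a minimal nonnegative solution `x* > 0`,
and write `F'_x = M - b(x,·) - b(·,x)`. If `F'_{x*}` is nonsingular then `F'_x` is a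
nonsingular M-matrix for all `0 ≤ x ≤ x*`; if `F'_{x*}` is irreducible then `F'_x` is
a nonsingular M-matrix for all `0 ≤ x ≤ x*` with `F'_x ≠ F'_{x*}`. -/
theorem qve_derivative_below_minimal_nonsingular {n : ℕ}
    (M : Matrix (Fin n) (Fin n) ℝ) (hM : IsNsMMat M)
    (a : Fin n → ℝ) (ha : 0 ≤ a)
    (b : (Fin n → ℝ) →ₗ[ℝ] (Fin n → ℝ) →ₗ[ℝ] (Fin n → ℝ))
    (hb : ∀ x y : Fin n → ℝ, 0 ≤ x → 0 ≤ y → 0 ≤ b x y)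
    (xs : Fin n → ℝ) (hxs_nonneg : 0 ≤ xs) (hxs_sol : M *ᵥ xs = a + b xs xs)
    (hxs_min : ∀ s : Fin n → ℝ, 0 ≤ s → M *ᵥ s = a + b s s → xs ≤ s)
    (hxs_pos : ∀ i, 0 < xs i)
    (Fder : (Fin n → ℝ) → Matrix (Fin n) (Fin n) ℝ)
    (hFder : ∀ x, Fder x =
      M - LinearMap.toMatrix' (b x) - LinearMap.toMatrix' (b.flip x)) :
    (IsUnit (Fder xs).det →
      ∀ x : Fin n → ℝ, 0 ≤ x → x ≤ xs → IsNsMMat (Fder x)) ∧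
    (IsIrred (Fder xs) →
      ∀ x : Fin n → ℝ, 0 ≤ x → x ≤ xs → Fder x ≠ Fder xs → IsNsMMat (Fder x)) := by
  classical
  rcases Nat.eq_zero_or_pos n with hn | hn
  · subst hn
    have htriv : ∀ x : Fin 0 → ℝ, IsNsMMat (Fder x) := by
      intro x
      constructor
      · refine ⟨0, 0, fun i j => le_refl _, ?_, Subsingleton.elim _ _⟩
        have hsp : {r : ℝ | ∃ μ ∈ spectrum ℂ
            ((0 : Matrix (Fin 0) (Fin 0) ℝ).map Complex.ofReal), ‖μ‖ = r} = ∅ := by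
          ext r
          simp only [Set.mem_setOf_eq, Set.mem_empty_iff_false, iff_false]
          rintro ⟨μ, hμ, -⟩
          exact (spectrum.mem_iff.mp hμ) (isUnit_of_subsingleton _)
        show sSup {r : ℝ | ∃ μ ∈ spectrum ℂ
            ((0 : Matrix (Fin 0) (Fin 0) ℝ).map Complex.ofReal), ‖μ‖ = r} ≤ 0
        rw [hsp, Real.sSup_empty]
      · rw [Matrix.det_fin_zero]; exact isUnit_one
    exact ⟨fun _ x _ _ => htriv x, fun _ x _ _ _ => htriv x⟩
  obtain ⟨⟨t, P, hP0, hPt, hMeq⟩, hMdet⟩ := hM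
  have i0 : Fin n := ⟨0, hn⟩
  -- t is positive
  have ht : 0 < t := by
    by_contra h
    push_neg at h
    have hMent : ∀ i j, M i j ≤ 0 := by
      intro i j
      rw [hMeq]
      simp only [Matrix.sub_apply, Matrix.smul_apply, Matrix.one_apply, smul_eq_mul]
      split
      · linarith [hP0 i j]
      · simp; linarith [hP0 i j]
    have h1 : ∀ i, (M *ᵥ xs) i ≤ 0 := by
      intro i
      simp only [Matrix.mulVec, dotProduct]
      exact Finset.sum_nonpos fun j _ =>
        mul_nonpos_of_nonpos_of_nonneg (hMent i j) (hxs_nonneg j)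
    have h2 : ∀ i, 0 ≤ (M *ᵥ xs) i := by
      intro i
      rw [hxs_sol]
      have ha' := ha i
      have hbb' := hb xs xs hxs_nonneg hxs_nonneg i
      simp only [Pi.add_apply, Pi.zero_apply] at ha' hbb' ⊢
      linarith
    have h3 : M *ᵥ xs = 0 := funext fun i => le_antisymm (h1 i) (h2 i)
    have h4 : xs ≠ 0 := fun he => absurd (congrFun he i0) (ne_of_gt (hxs_pos i0))
    have h5 : M.det = 0 := Matrix.exists_mulVec_eq_zero_iff.mp ⟨xs, h4, h3⟩
    rw [h5] at hMdet
    exact not_isUnit_zero hMdet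
  -- the bilinear-part matrices
  set B1 : (Fin n → ℝ) → Matrix (Fin n) (Fin n) ℝ :=
    fun x => LinearMap.toMatrix' (b x) with hB1def
  set B2 : (Fin n → ℝ) → Matrix (Fin n) (Fin n) ℝ :=
    fun x => LinearMap.toMatrix' (b.flip x) with hB2def
  have hFder' : ∀ x, Fder x = M - B1 x - B2 x := fun x => hFder x
  have hB1mulVec : ∀ x v, B1 x *ᵥ v = b x v := by
    intro x v
    show LinearMap.toMatrix' (b x) *ᵥ v = b x v
    rw [← Matrix.toLin'_apply, Matrix.toLin'_toMatrix']
  have hB2mulVec : ∀ x v, B2 x *ᵥ v = b v x := by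
    intro x v
    show LinearMap.toMatrix' (b.flip x) *ᵥ v = b v x
    rw [← Matrix.toLin'_apply, Matrix.toLin'_toMatrix', LinearMap.flip_apply]
  have hbas : ∀ j : Fin n, (0 : Fin n → ℝ) ≤ fun j' => if j' = j then 1 else 0 := by
    intro j j'
    simp only [Pi.zero_apply]
    split <;> norm_num
  have hB1ent : ∀ x : Fin n → ℝ, 0 ≤ x → ∀ i j, 0 ≤ B1 x i j := by
    intro x hx i j
    show 0 ≤ LinearMap.toMatrix' (b x) i j
    rw [LinearMap.toMatrix'_apply]
    exact hb x _ hx (by intro k; rw [Pi.single_apply]; split <;> norm_num) i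
  have hB2ent : ∀ x : Fin n → ℝ, 0 ≤ x → ∀ i j, 0 ≤ B2 x i j := by
    intro x hx i j
    show 0 ≤ LinearMap.toMatrix' (b.flip x) i j
    rw [LinearMap.toMatrix'_apply, LinearMap.flip_apply]
    exact hb _ x (by intro k; rw [Pi.single_apply]; split <;> norm_num) hx i
  have hB1sub : ∀ x x' : Fin n → ℝ, B1 x' - B1 x = B1 (x' - x) := by
    intro x x'
    show LinearMap.toMatrix' (b x') - LinearMap.toMatrix' (b x)
      = LinearMap.toMatrix' (b (x' - x))
    rw [map_sub, map_sub]
  have hB2sub : ∀ x x' : Fin n → ℝ, B2 x' - B2 x = B2 (x' - x) := by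
    intro x x'
    show LinearMap.toMatrix' (b.flip x') - LinearMap.toMatrix' (b.flip x)
      = LinearMap.toMatrix' (b.flip (x' - x))
    rw [map_sub, map_sub]
  -- the Jacobian-part matrix at the minimal solution
  set Qs : Matrix (Fin n) (Fin n) ℝ := P + B1 xs + B2 xs with hQsdef
  have hQs0 : ∀ i j, 0 ≤ Qs i j := by
    intro i j
    have := hP0 i j
    have := hB1ent xs hxs_nonneg i j
    have := hB2ent xs hxs_nonneg i j
    simp only [hQsdef, Matrix.add_apply]
    linarith
  have hFQs : Fder xs = t • (1 : Matrix (Fin n) (Fin n) ℝ) - Qs := by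
    rw [hFder' xs, hMeq, hQsdef]; abel
  -- monotonicity of b
  have hbmono : ∀ z z' w w' : Fin n → ℝ,
      0 ≤ z → z ≤ z' → 0 ≤ w → w ≤ w' → b z w ≤ b z' w' := by
    intro z z' w w' hz hzz hw hww
    have hdz : 0 ≤ z' - z := by
      intro i; simp only [Pi.sub_apply, Pi.zero_apply]; linarith [hzz i]
    have hdw : 0 ≤ w' - w := by
      intro i; simp only [Pi.sub_apply, Pi.zero_apply]; linarith [hww i]
    have hw' : 0 ≤ w' := le_trans hw hww
    have e1 : b (z' - z) w' = b z' w' - b z w' := by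
      rw [map_sub]; simp [LinearMap.sub_apply]
    have e2 : b z (w' - w) = b z w' - b z w := by rw [map_sub]
    intro i
    have h1 := hb z (w' - w) hz hdw i
    have h2 := hb (z' - z) w' hdz hw' i
    rw [e1] at h2
    rw [e2] at h1
    simp only [Pi.sub_apply, Pi.zero_apply] at h1 h2
    linarith
  -- the supersolution principle
  have hsuper : ∀ y, 0 ≤ y → a + b y y ≤ M *ᵥ y → xs ≤ y :=
    fun y hy hs => supersol M a ha b hb xs hxs_min t ht P hP0 hMeq y hy hs
  -- ================= master lemma =================
  have hmaster : ∀ u : Fin n → ℝ, 0 ≤ u → t • u ≤ Qs *ᵥ u →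
      (IsUnit (Fder xs).det → u = 0) ∧
      (IsIrred (Fder xs) → u ≠ 0 → Qs *ᵥ u = t • u ∧ ∀ i, 0 < u i) := by
    intro u hu0 hQu
    set A1 : Matrix (Fin n) (Fin n) ℝ :=
      (t • (1 : Matrix (Fin n) (Fin n) ℝ) + Qs) ^ n with hA1def
    have hA1ent : ∀ i j, 0 ≤ A1 i j := ent_pow (A1_ent ht hQs0) n
    set U : Fin n → ℝ := A1 *ᵥ u with hUdef
    set g : Fin n → ℝ := Qs *ᵥ u - t • u with hgdef
    have hg0 : 0 ≤ g := by
      intro i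
      have h' := hQu i
      simp only [hgdef, Pi.sub_apply, Pi.smul_apply, Pi.zero_apply, smul_eq_mul] at h' ⊢
      linarith
    have hU0 : 0 ≤ U := mulVec_nonneg hA1ent hu0
    have hU0' : ∀ i, (0:ℝ) ≤ U i := fun i => hU0 i
    have hu0' : ∀ i, (0:ℝ) ≤ u i := fun i => hu0 i
    have hUlow : t ^ n • u ≤ U := pow_mulVec_lower ht hQs0 n u hu0
    set V : Fin n → ℝ := Qs *ᵥ U - t • U with hVdef
    have hcomm : Qs * A1 = A1 * Qs := by
      have c1 : Commute Qs (t • (1 : Matrix (Fin n) (Fin n) ℝ) + Qs) :=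
        ((Commute.one_right Qs).smul_right t).add_right (Commute.refl Qs)
      exact (c1.pow_right n)
    have hVA : V = A1 *ᵥ g := by
      rw [hVdef, hgdef, Matrix.mulVec_sub, Matrix.mulVec_smul]
      congr 1
      rw [hUdef, Matrix.mulVec_mulVec, Matrix.mulVec_mulVec, hcomm]
    have hV0 : 0 ≤ V := hVA ▸ mulVec_nonneg hA1ent hg0
    have hV0' : ∀ i, (0:ℝ) ≤ V i := fun i => hV0 i
    have hg0' : ∀ i, (0:ℝ) ≤ g i := fun i => hg0 i
    have hVlow : t ^ n • g ≤ V := hVA ▸ pow_mulVec_lower ht hQs0 n g hg0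
    have hUstab : ∀ i j, U i = 0 → 0 < U j → Qs i j = 0 :=
      fun i j h1 h2 => supp_stab ht hQs0 u hu0 i j h1 h2
    have hVstab : ∀ i j, V i = 0 → 0 < V j → Qs i j = 0 := by
      intro i j h1 h2
      rw [hVA] at h1 h2
      exact supp_stab ht hQs0 g hg0 i j h1 h2
    have hUneOfune : u ≠ 0 → U ≠ 0 := by
      intro hune hU
      apply hune
      funext i
      have h1 := hUlow i
      rw [hU] at h1
      have h2 := hu0' i
      have h3 := pow_pos ht n
      simp only [Pi.smul_apply, Pi.zero_apply, smul_eq_mul] at h1 ⊢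
      nlinarith
    -- the good case: contradiction via a strict supersolution below xs
    have hGC : (∀ i, 0 < U i → 0 < V i) → U ≠ 0 → False := by
      intro hgood hUne
      obtain ⟨i1, hi1⟩ := Function.ne_iff.mp hUne
      have hUi1 : 0 < U i1 := lt_of_le_of_ne (hU0 i1) (Ne.symm (by simpa using hi1))
      have hbUU0 : ∀ i, 0 ≤ (b U U) i := fun i => hb U U hU0 hU0 i
      -- vanishing of b (U,U) outside the support of U
      have hvanish : ∀ i, U i = 0 → (b U U) i = 0 := by
        intro i hUi
        set c : ℝ := (∑ j, U j / xs j) + 1 with hcdef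
        have hc0 : 0 < c := by
          have : 0 ≤ ∑ j, U j / xs j :=
            Finset.sum_nonneg fun j _ => div_nonneg (hU0 j) (hxs_pos j).le
          rw [hcdef]; linarith
        have hc : ∀ j, U j ≤ c * xs j := by
          intro j
          have h1 : U j / xs j ≤ ∑ j', U j' / xs j' :=
            Finset.single_le_sum
              (fun j' _ => div_nonneg (hU0 j') (hxs_pos j').le) (Finset.mem_univ j)
          have h2 : U j / xs j ≤ c := by rw [hcdef]; linarith
          have h3 : U j / xs j * xs j ≤ c * xs j :=
            mul_le_mul_of_nonneg_right h2 (hxs_pos j).le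
          rwa [div_mul_cancel₀ _ (ne_of_gt (hxs_pos j))] at h3
        set xS : Fin n → ℝ := fun j => if 0 < U j then xs j else 0 with hxSdef
        have hxS0 : 0 ≤ xS := by
          intro j
          simp only [hxSdef, Pi.zero_apply]
          split
          · exact (hxs_pos j).le
          · exact le_refl 0
        have hUle : U ≤ c • xS := by
          intro j
          by_cases hj : 0 < U j
          · simp only [hxSdef, Pi.smul_apply, smul_eq_mul, if_pos hj]
            exact hc j
          · have hUj : U j = 0 := le_antisymm (not_lt.mp hj) (hU0 j)
            simp only [hxSdef, Pi.smul_apply, smul_eq_mul, if_neg hj, mul_zero]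
            simp [hUj]
        have hxSle : xS ≤ xs := by
          intro j
          simp only [hxSdef]
          split
          · exact le_refl _
          · exact (hxs_pos j).le
        have hcxS0 : 0 ≤ c • xS := by
          intro j
          have h' := hxS0 j
          simp only [Pi.smul_apply, Pi.zero_apply, smul_eq_mul] at h' ⊢
          nlinarith
        have hmono1 : b U U ≤ b (c • xS) (c • xS) :=
          hbmono U (c • xS) U (c • xS) hU0 hUle hU0 hUle
        have hsmul : b (c • xS) (c • xS) = (c * c) • b xS xS := by
          have e1 : b (c • xS) = c • b xS := _root_.map_smul b c xS
          have e2 : (b xS) (c • xS) = c • (b xS) xS := _root_.map_smul (b xS) c xS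
          rw [e1, LinearMap.smul_apply, e2, smul_smul]
        have hmono2 : b xS xS ≤ b xs xS :=
          hbmono xS xs xS xS hxS0 hxSle hxS0 (le_refl xS)
        have hzero : (b xs xS) i = 0 := by
          rw [← hB1mulVec xs xS]
          simp only [Matrix.mulVec, dotProduct]
          refine Finset.sum_eq_zero fun j _ => ?_
          simp only [hxSdef]
          by_cases hj : 0 < U j
          · rw [if_pos hj]
            have hQij : Qs i j = 0 := hUstab i j hUi hj
            have h1 := hB1ent xs hxs_nonneg i j
            have h2 := hB2ent xs hxs_nonneg i j
            have h3 := hP0 i j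
            have h4 : P i j + B1 xs i j + B2 xs i j = 0 := by
              rw [← hQij, hQsdef]; simp [Matrix.add_apply]
            have : B1 xs i j = 0 := by linarith
            rw [this, zero_mul]
          · rw [if_neg hj, mul_zero]
        have h1 := hmono1 i
        have h2 := hmono2 i
        rw [hsmul] at h1
        simp only [Pi.smul_apply, smul_eq_mul] at h1
        have h3 : (b xS xS) i ≤ 0 := by rw [← hzero]; exact h2
        have h5 := hbUU0 i
        nlinarith
      -- choose ε
      have hne : (Finset.univ : Finset (Fin n)).Nonempty := ⟨i1, Finset.mem_univ i1⟩
      set f : Fin n → ℝ := fun i =>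
        min (xs i / (U i + 1)) (if 0 < U i then V i / ((b U U) i + 1) else 1) with hfdef
      have hfpos : ∀ i, 0 < f i := by
        intro i
        simp only [hfdef]
        apply lt_min
        · exact div_pos (hxs_pos i) (by linarith [hU0' i])
        · by_cases hi : 0 < U i
          · rw [if_pos hi]
            exact div_pos (hgood i hi) (by linarith [hbUU0 i])
          · rw [if_neg hi]
            norm_num
      set ε : ℝ := Finset.univ.inf' hne f with hεdef
      have hε : 0 < ε := (Finset.lt_inf'_iff hne).mpr fun i _ => hfpos i
      have hεle : ∀ i, ε ≤ f i := fun i => Finset.inf'_le f (Finset.mem_univ i)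
      have h1 : ∀ i, ε * U i ≤ xs i := by
        intro i
        have h2 : ε ≤ xs i / (U i + 1) := le_trans (hεle i) (min_le_left _ _)
        have h3 : (0:ℝ) < U i + 1 := by linarith [hU0' i]
        have h4 : ε * U i ≤ xs i / (U i + 1) * U i :=
          mul_le_mul_of_nonneg_right h2 (hU0 i)
        have h5 : xs i / (U i + 1) * U i ≤ xs i := by
          rw [div_mul_eq_mul_div, div_le_iff₀ h3]
          nlinarith [hxs_pos i, hU0' i]
        linarith
      have h2 : ∀ i, ε * (b U U) i ≤ V i := by
        intro i
        by_cases hi : 0 < U i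
        · have h3 : ε ≤ V i / ((b U U) i + 1) := by
            have := le_trans (hεle i) (min_le_right _ _)
            rwa [if_pos hi] at this
          have hb0 := hbUU0 i
          have h4 : ε * (b U U) i ≤ V i / ((b U U) i + 1) * (b U U) i :=
            mul_le_mul_of_nonneg_right h3 hb0
          have h5 : V i / ((b U U) i + 1) * (b U U) i ≤ V i := by
            rw [div_mul_eq_mul_div, div_le_iff₀ (by linarith)]
            nlinarith [hV0' i]
          linarith
        · have hUi : U i = 0 := le_antisymm (not_lt.mp hi) (hU0 i)
          rw [hvanish i hUi, mul_zero]
          exact hV0 i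
      set y : Fin n → ℝ := xs - ε • U with hydef
      have hy0 : 0 ≤ y := by
        intro i
        simp only [hydef, Pi.sub_apply, Pi.smul_apply, Pi.zero_apply, smul_eq_mul]
        linarith [h1 i]
      have hMU : M *ᵥ U = B1 xs *ᵥ U + B2 xs *ᵥ U - V := by
        rw [hMeq, hVdef, hQsdef]
        simp only [Matrix.sub_mulVec, Matrix.add_mulVec, Matrix.smul_mulVec,
          Matrix.one_mulVec]
        abel
      have hsupersol : a + b y y ≤ M *ᵥ y := by
        have hby : b y y = b xs xs - ε • (b xs U) - ε • (b U xs) + (ε * ε) • b U U := by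
          have e1 : b y = b xs - ε • b U := by
            have h' := _root_.map_sub b xs (ε • U)
            rw [hydef, h', _root_.map_smul b ε U]
          rw [show b y y = (b xs - ε • b U) y from by rw [e1]]
          simp only [LinearMap.sub_apply, LinearMap.smul_apply, hydef, _root_.map_sub,
            _root_.map_smul]
          module
        have hMy : M *ᵥ y = M *ᵥ xs - ε • (M *ᵥ U) := by
          rw [hydef, Matrix.mulVec_sub, Matrix.mulVec_smul]
        intro i
        rw [hby, hMy, hxs_sol, hMU]
        have e2 : (B1 xs *ᵥ U) i = (b xs U) i := by rw [hB1mulVec]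
        have e3 : (B2 xs *ᵥ U) i = (b U xs) i := by rw [hB2mulVec]
        simp only [Pi.add_apply, Pi.sub_apply, Pi.smul_apply, smul_eq_mul]
        rw [e2, e3]
        have h6 := h2 i
        nlinarith [hε]
      have hge := hsuper y hy0 hsupersol
      have h7 := hge i1
      simp only [hydef, Pi.sub_apply, Pi.smul_apply, smul_eq_mul] at h7
      nlinarith [hUi1, hε]
    -- ============ part (a) ============
    constructor
    · intro hdet
      by_contra hune
      have hUne : U ≠ 0 := hUneOfune hune
      by_cases hgood : ∀ i, 0 < U i → 0 < V i
      · exact hGC hgood hUne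
      · push_neg at hgood
        obtain ⟨i2, hUi2, hVi2'⟩ := hgood
        have hVi2 : V i2 = 0 := le_antisymm hVi2' (hV0 i2)
        have hdet0 : (Fder xs).det = 0 := by
          apply det_block (p := fun i => 0 < V i)
          · intro i j hpi hpj
            have hVi : V i = 0 := le_antisymm (not_lt.mp hpi) (hV0 i)
            have hQij : Qs i j = 0 := hVstab i j hVi hpj
            have hij : i ≠ j := fun he => hpi (he ▸ hpj)
            rw [hFQs]
            simp [Matrix.sub_apply, Matrix.smul_apply, Matrix.one_apply_ne hij, hQij]
          · exact ⟨i2, fun h => absurd hVi2 (ne_of_gt h), ne_of_gt hUi2⟩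
          · intro i hpi
            have hVi : V i = 0 := le_antisymm (not_lt.mp hpi) (hV0 i)
            have hQUi : (Qs *ᵥ U) i = t * U i := by
              have h8 : (Qs *ᵥ U) i - t * U i = V i := by
                simp only [hVdef, Pi.sub_apply, Pi.smul_apply, smul_eq_mul]
              rw [hVi] at h8
              linarith
            have hsplit : ∑ j ∈ Finset.univ.filter (fun j => ¬ 0 < V j), Qs i j * U j
                = (Qs *ᵥ U) i := by
              have hz : ∑ j ∈ Finset.univ.filter (fun j => 0 < V j), Qs i j * U j = 0 :=
                Finset.sum_eq_zero fun j hj => by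
                  rw [hVstab i j hVi (Finset.mem_filter.mp hj).2, zero_mul]
              have hsum := Finset.sum_filter_add_sum_filter_not Finset.univ
                (fun j => 0 < V j) (fun j => Qs i j * U j)
              rw [hz, zero_add] at hsum
              rw [hsum]
              simp [Matrix.mulVec, dotProduct]
            have hione : ∑ j ∈ Finset.univ.filter (fun j => ¬ 0 < V j),
                (t • (1 : Matrix (Fin n) (Fin n) ℝ)) i j * U j = t * U i := by
              rw [Finset.sum_eq_single_of_mem i
                (Finset.mem_filter.mpr ⟨Finset.mem_univ i, hpi⟩)]
              · simp [Matrix.smul_apply, Matrix.one_apply]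
              · intro j _ hji
                rw [Matrix.smul_apply, Matrix.one_apply_ne' hji]
                simp
            calc ∑ j ∈ Finset.univ.filter (fun j => ¬ 0 < V j), (Fder xs) i j * U j
                = ∑ j ∈ Finset.univ.filter (fun j => ¬ 0 < V j),
                    ((t • (1 : Matrix (Fin n) (Fin n) ℝ)) i j * U j - Qs i j * U j) := by
                  refine Finset.sum_congr rfl fun j _ => ?_
                  rw [hFQs]
                  simp only [Matrix.sub_apply]
                  ring
              _ = t * U i - (Qs *ᵥ U) i := by
                  rw [Finset.sum_sub_distrib, hione, hsplit]
              _ = 0 := by rw [hQUi]; ring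
        rw [hdet0] at hdet
        exact not_isUnit_zero hdet
    -- ============ part (b) ============
    · intro hirr hune
      by_cases hV : V = 0
      · have hgeq : g = 0 := by
          funext i
          have hlo := hVlow i
          rw [hV] at hlo
          have h9 := hg0' i
          have h10 := pow_pos ht n
          simp only [Pi.smul_apply, Pi.zero_apply, smul_eq_mul] at hlo ⊢
          nlinarith
        have hQu' : Qs *ᵥ u = t • u := by
          have h11 : Qs *ᵥ u - t • u = 0 := hgeq
          funext i
          have h' := congrFun h11 i
          simp only [Pi.sub_apply, Pi.smul_apply, Pi.zero_apply, smul_eq_mul] at h' ⊢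
          linarith
        refine ⟨hQu', ?_⟩
        have hustab : ∀ i j, u i = 0 → 0 < u j → Qs i j = 0 := by
          intro i j hui huj
          have hQui : (Qs *ᵥ u) i = 0 := by rw [hQu']; simp [hui]
          have hnn : ∀ j' ∈ Finset.univ, 0 ≤ Qs i j' * u j' :=
            fun j' _ => mul_nonneg (hQs0 i j') (hu0 j')
          have hz := (Finset.sum_eq_zero_iff_of_nonneg hnn).mp
            (by simpa [Matrix.mulVec, dotProduct] using hQui) j (Finset.mem_univ j)
          exact (mul_eq_zero.mp hz).resolve_right (ne_of_gt huj)
        obtain ⟨j1, hj1⟩ := Function.ne_iff.mp hune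
        have hj1pos : 0 < u j1 := lt_of_le_of_ne (hu0 j1) (Ne.symm (by simpa using hj1))
        refine irred_stable hirr (fun i => 0 < u i) ⟨j1, hj1pos⟩ ?_
        intro i j hpi hpj hij
        have hui : u i = 0 := le_antisymm (not_lt.mp hpi) (hu0 i)
        rw [hFQs]
        simp [Matrix.sub_apply, Matrix.smul_apply, Matrix.one_apply_ne hij,
          hustab i j hui hpj]
      · obtain ⟨j2, hj2⟩ := Function.ne_iff.mp hV
        have hj2pos : 0 < V j2 := lt_of_le_of_ne (hV0 j2) (Ne.symm (by simpa using hj2))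
        have hall : ∀ i, 0 < V i := by
          refine irred_stable hirr (fun i => 0 < V i) ⟨j2, hj2pos⟩ ?_
          intro i j hpi hpj hij
          have hVi : V i = 0 := le_antisymm (not_lt.mp hpi) (hV0 i)
          rw [hFQs]
          simp [Matrix.sub_apply, Matrix.smul_apply, Matrix.one_apply_ne hij,
            hVstab i j hVi hpj]
        exact (hGC (fun i _ => hall i) (hUneOfune hune)).elim
  -- ================= the crux reduction =================
  have hcrux : ∀ x : Fin n → ℝ, 0 ≤ x → x ≤ xs →
      (∀ u : Fin n → ℝ, 0 ≤ u → u ≠ 0 → t • u ≤ (P + B1 x + B2 x) *ᵥ u → False) →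
      IsNsMMat (Fder x) := by
    intro x hx0 hxle hno
    set Qx : Matrix (Fin n) (Fin n) ℝ := P + B1 x + B2 x with hQxdef
    have hQx0 : ∀ i j, 0 ≤ Qx i j := by
      intro i j
      have := hP0 i j
      have := hB1ent x hx0 i j
      have := hB2ent x hx0 i j
      simp only [hQxdef, Matrix.add_apply]
      linarith
    have hFQx : Fder x = t • (1 : Matrix (Fin n) (Fin n) ℝ) - Qx := by
      rw [hFder' x, hMeq, hQxdef]; abel
    constructor
    · refine ⟨t, Qx, hQx0, ?_, hFQx⟩
      show sSup {r : ℝ | ∃ μ ∈ spectrum ℂ (Qx.map Complex.ofReal), ‖μ‖ = r} ≤ t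
      refine Real.sSup_le ?_ ht.le
      rintro r ⟨μ, hμ, hr⟩
      by_contra hrt
      push_neg at hrt
      obtain ⟨u, hu0, hune, huineq⟩ := abs_eig hQx0 hμ
      have hrabs : ‖μ‖ = r := by rw [← hr]
      refine hno u hu0 hune ?_
      intro i
      have h12 := huineq i
      rw [hrabs] at h12
      have h13 : (0:ℝ) ≤ u i := hu0 i
      simp only [Pi.smul_apply, Pi.zero_apply, smul_eq_mul] at h12 ⊢
      nlinarith
    · rw [isUnit_iff_ne_zero]
      intro hdet0
      obtain ⟨v, hv0, hvker⟩ := Matrix.exists_mulVec_eq_zero_iff.mpr hdet0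
      have hQv : Qx *ᵥ v = t • v := by
        rw [hFQx, Matrix.sub_mulVec, Matrix.smul_mulVec, Matrix.one_mulVec]
          at hvker
        funext i
        have h' := congrFun hvker i
        simp only [Pi.sub_apply, Pi.smul_apply, Pi.zero_apply, smul_eq_mul] at h' ⊢
        linarith
      obtain ⟨i3, hi3⟩ := Function.ne_iff.mp hv0
      refine hno (fun i => |v i|) (fun i => abs_nonneg _)
        (Function.ne_iff.mpr ⟨i3, by simpa using abs_ne_zero.mpr hi3⟩) ?_
      intro i
      have e1 : (Qx *ᵥ v) i = t * v i := by rw [hQv]; simp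
      have key : t * |v i| ≤ (Qx *ᵥ fun j => |v j|) i := by
        calc t * |v i| = |t * v i| := by rw [abs_mul, abs_of_nonneg ht.le]
          _ = |∑ j, Qx i j * v j| := by
              rw [← e1]; simp [Matrix.mulVec, dotProduct]
          _ ≤ ∑ j, |Qx i j * v j| := Finset.abs_sum_le_sum_abs _ _
          _ = ∑ j, Qx i j * |v j| := by
              refine Finset.sum_congr rfl fun j _ => ?_
              rw [abs_mul, abs_of_nonneg (hQx0 i j)]
          _ = (Qx *ᵥ fun j => |v j|) i := by simp [Matrix.mulVec, dotProduct]
      simpa using key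
  -- comparison of Qx and Qs
  have hQcomp : ∀ x : Fin n → ℝ, 0 ≤ x → x ≤ xs → ∀ u : Fin n → ℝ, 0 ≤ u →
      (P + B1 x + B2 x) *ᵥ u ≤ Qs *ᵥ u := by
    intro x hx0 hxle u hu0
    have hxd : 0 ≤ xs - x := by
      intro i; simp only [Pi.sub_apply, Pi.zero_apply]; linarith [hxle i]
    have hd : ∀ i j, 0 ≤ (Qs - (P + B1 x + B2 x)) i j := by
      intro i j
      have e : Qs - (P + B1 x + B2 x) = B1 (xs - x) + B2 (xs - x) := by
        rw [hQsdef, ← hB1sub x xs, ← hB2sub x xs]; abel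
      rw [e]
      have := hB1ent (xs - x) hxd i j
      have := hB2ent (xs - x) hxd i j
      simp only [Matrix.add_apply]
      linarith
    intro i
    have h14 := mulVec_nonneg hd hu0 i
    rw [Matrix.sub_mulVec] at h14
    simp only [Pi.sub_apply, Pi.zero_apply] at h14 ⊢
    linarith
  -- ================= conclusion =================
  constructor
  · intro hdet x hx0 hxle
    refine hcrux x hx0 hxle ?_
    intro u hu0 hune hQxu
    have h15 : t • u ≤ Qs *ᵥ u := le_trans hQxu (hQcomp x hx0 hxle u hu0)
    exact hune ((hmaster u hu0 h15).1 hdet)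
  · intro hirr x hx0 hxle hFne
    refine hcrux x hx0 hxle ?_
    intro u hu0 hune hQxu
    have h15 : t • u ≤ Qs *ᵥ u := le_trans hQxu (hQcomp x hx0 hxle u hu0)
    obtain ⟨hQu, hupos⟩ := (hmaster u hu0 h15).2 hirr hune
    have hsand : (P + B1 x + B2 x) *ᵥ u = Qs *ᵥ u :=
      le_antisymm (hQcomp x hx0 hxle u hu0) (hQu ▸ hQxu)
    have hDu : (Qs - (P + B1 x + B2 x)) *ᵥ u = 0 := by
      rw [Matrix.sub_mulVec, hsand, sub_self]
    have hD0 : Qs = P + B1 x + B2 x := by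
      have hent : ∀ i j, 0 ≤ (Qs - (P + B1 x + B2 x)) i j := by
        intro i j
        have hxd : 0 ≤ xs - x := by
          intro i'; simp only [Pi.sub_apply, Pi.zero_apply]; linarith [hxle i']
        have e : Qs - (P + B1 x + B2 x) = B1 (xs - x) + B2 (xs - x) := by
          rw [hQsdef, ← hB1sub x xs, ← hB2sub x xs]; abel
        rw [e]
        have := hB1ent (xs - x) hxd i j
        have := hB2ent (xs - x) hxd i j
        simp only [Matrix.add_apply]
        linarith
      have hzero : Qs - (P + B1 x + B2 x) = 0 := by
        ext i j
        have hsum : ∑ j', (Qs - (P + B1 x + B2 x)) i j' * u j' = 0 := by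
          have := congrFun hDu i
          simpa [Matrix.mulVec, dotProduct] using this
        have hnn : ∀ j' ∈ Finset.univ, 0 ≤ (Qs - (P + B1 x + B2 x)) i j' * u j' :=
          fun j' _ => mul_nonneg (hent i j') (hupos j').le
        have hz := (Finset.sum_eq_zero_iff_of_nonneg hnn).mp hsum j (Finset.mem_univ j)
        simpa using (mul_eq_zero.mp hz).resolve_right (ne_of_gt (hupos j))
      exact sub_eq_zero.mp hzero
    have heq : Fder x = Fder xs := by
      rw [hFder' x, hFder' xs]
      have h16 : B1 x + B2 x = B1 xs + B2 xs := by
        have h17 := hD0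
        rw [hQsdef] at h17
        have h18 : P + (B1 xs + B2 xs) = P + (B1 x + B2 x) := by
          rw [← add_assoc, ← add_assoc, h17]
        exact (add_left_cancel h18).symm
      calc M - B1 x - B2 x = M - (B1 x + B2 x) := by abel
        _ = M - (B1 xs + B2 xs) := by rw [h16]
        _ = M - B1 xs - B2 xs := by abel
    exact hFne heq
end
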